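/- arXiv:1002.4883 — 3 statements merged into one kernel-verified Lean document; each statement's English description precedes it below -/
import Mathlib

section
/- Let f be a holomorphic generator on 𝔻 with Denjoy–Wolff point a = 0, i.e. f(z) = z·p(z) with p holomorphic and Re p ≥ 0 on 𝔻, and let ζ_1, …, ζ_N (N ≥ 1) be pairwise distinct boundary regular null points of f with f'(ζ_n) = ∠lim_{z→ζ_n} f(z)/(z − ζ_n) < 0 real (then necessarily f'(0) = p(0) satisfies Re f'(0) > 0). Then Σ_{n=1}^{N} 1/|f'(ζ_n)| ≤ 2·Re(1/f'(0)), and equality holds if and only if there is a real constant c such that 1/f(z) = Σ_{n=1}^{N} (1/|f'(ζ_n)|)·(1/(2z) − 1/(z − ζ_n)) + i·c/z for all z ∈ 𝔻 \ {0}. -/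
open Complex Filter Metric Finset

noncomputable section

/-- The Stolz angle at a boundary point `ζ` with opening parameter `M`. -/
def StolzAngle (ζ : ℂ) (M : ℝ) : Set ℂ :=
  {z : ℂ | ‖z‖ < 1 ∧ ‖ζ - z‖ < M * (1 - ‖z‖)}

/-- Angular (nontangential) limit of `h` at `ζ` equals `L`: within every Stolz
angle `S(ζ, M)`, `M > 1`, the function tends to `L`. -/
def AngularLimit (h : ℂ → ℂ) (ζ : ℂ) (L : ℂ) : Prop :=
  ∀ M : ℝ, 1 < M → Tendsto h (nhdsWithin ζ (StolzAngle ζ M)) (nhds L)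

/-- Angular limit of `h` at `ζ` is `∞`: `|h|` tends to `+∞` within every Stolz angle. -/
def AngularLimitInfty (h : ℂ → ℂ) (ζ : ℂ) : Prop :=
  ∀ M : ℝ, 1 < M → Tendsto (fun z => ‖h z‖) (nhdsWithin ζ (StolzAngle ζ M)) atTop

variable {a z w : ℂ}

def mob (a z : ℂ) : ℂ := (a - z) / (1 - (starRingEnd ℂ) a * z)

lemma key1 (a z : ℂ) :
    normSq (1 - (starRingEnd ℂ) a * z) - normSq (a - z)
      = (1 - normSq a) * (1 - normSq z) := by
  have h : ((normSq (1 - (starRingEnd ℂ) a * z) - normSq (a - z) : ℝ) : ℂ)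
      = (((1 - normSq a) * (1 - normSq z) : ℝ) : ℂ) := by
    push_cast
    rw [← Complex.mul_conj, ← Complex.mul_conj, ← Complex.mul_conj, ← Complex.mul_conj]
    simp only [map_sub, map_mul, map_one, Complex.conj_conj]
    ring
  exact_mod_cast h

lemma key3 (u v : ℂ) :
    normSq ((starRingEnd ℂ) v + u) - normSq (v - u) = 4 * u.re * v.re := by
  have h : ((normSq ((starRingEnd ℂ) v + u) - normSq (v - u) : ℝ) : ℂ)
      = ((4 * u.re * v.re : ℝ) : ℂ) := by
    push_cast
    rw [← Complex.mul_conj, ← Complex.mul_conj]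
    simp only [map_add, map_sub, Complex.conj_conj]
    have h1 := Complex.add_conj u
    have h2 := Complex.add_conj v
    push_cast at h1 h2
    linear_combination (v + (starRingEnd ℂ) v) * h1 + (2 * (u.re : ℂ)) * h2
  exact_mod_cast h

lemma normSq_lt_normSq_iff {x y : ℂ} : ‖x‖ < ‖y‖ ↔ normSq x < normSq y := by
  rw [← Complex.sq_norm, ← Complex.sq_norm]
  exact (pow_lt_pow_iff_left₀ (norm_nonneg x) (norm_nonneg y) two_ne_zero).symm

lemma mob_denom_ne {a z : ℂ} (ha : ‖a‖ < 1) (hz : ‖z‖ < 1) :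
    1 - (starRingEnd ℂ) a * z ≠ 0 := by
  intro h
  have h1 : ‖(starRingEnd ℂ) a * z‖ < 1 := by
    rw [norm_mul, Complex.norm_conj]
    calc ‖a‖ * ‖z‖ ≤ ‖a‖ * 1 :=
      mul_le_mul_of_nonneg_left hz.le (norm_nonneg a)
    _ < 1 := by simpa using ha
  have : (1 : ℂ) = (starRingEnd ℂ) a * z := by linear_combination h
  rw [← this] at h1; simp at h1

lemma mob_maps {a z : ℂ} (ha : ‖a‖ < 1) (hz : ‖z‖ < 1) :
    ‖mob a z‖ < 1 := by
  have hd := mob_denom_ne ha hz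
  have h1 : normSq (a - z) < normSq (1 - (starRingEnd ℂ) a * z) := by
    have := key1 a z
    nlinarith [Complex.normSq_nonneg a, Complex.normSq_nonneg z,
      (normSq_lt_normSq_iff (x := a) (y := 1)).mp (by simpa using ha),
      (normSq_lt_normSq_iff (x := z) (y := 1)).mp (by simpa using hz),
      Complex.normSq_one]
  have h2 : ‖a - z‖ < ‖1 - (starRingEnd ℂ) a * z‖ :=
    normSq_lt_normSq_iff.mpr h1
  rw [mob, norm_div, div_lt_one (norm_pos_iff.mpr hd)]
  exact h2

lemma one_sub_mul_self_ne (ha : ‖a‖ < 1) : 1 - (starRingEnd ℂ) a * a ≠ 0 :=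
  mob_denom_ne ha ha

lemma mob_inv (ha : ‖a‖ < 1) (hz : ‖z‖ < 1) : mob a (mob a z) = z := by
  have h1 := mob_denom_ne ha hz
  have h2 := mob_denom_ne ha (mob_maps ha hz)
  have h3 := one_sub_mul_self_ne ha
  simp only [mob] at h2 ⊢
  field_simp at h2 ⊢
  ring_nf
  ring_nf at h2
  have h3' : (1 : ℂ) - a * (starRingEnd ℂ) a ≠ 0 := by
    intro h; apply h3; rw [mul_comm] at h; linear_combination h
  field_simp
  ring

lemma mob_self (a : ℂ) : mob a a = 0 := by simp [mob]

lemma mob_zero (a : ℂ) : mob a 0 = a := by simp [mob]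

lemma mob_diff (ha : ‖a‖ < 1) : DifferentiableOn ℂ (mob a) (ball (0:ℂ) 1) := by
  apply DifferentiableOn.div
  · exact (differentiable_const a).differentiableOn.sub differentiable_id.differentiableOn
  · exact (differentiable_const (1:ℂ)).differentiableOn.sub
      ((differentiable_const _).mul differentiable_id).differentiableOn
  · intro x hx
    exact mob_denom_ne ha (by simpa using mem_ball_zero_iff.mp hx)

lemma schwarz_pick {φ : ℂ → ℂ} (hd : DifferentiableOn ℂ φ (ball (0:ℂ) 1))
    (hm : Set.MapsTo φ (ball (0:ℂ) 1) (ball (0:ℂ) 1))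
    (hz : z ∈ ball (0:ℂ) 1) (hw : w ∈ ball (0:ℂ) 1) :
    ‖mob (φ w) (φ z)‖ ≤ ‖mob w z‖ := by
  have hz' : ‖z‖ < 1 := mem_ball_zero_iff.mp hz
  have hw' : ‖w‖ < 1 := mem_ball_zero_iff.mp hw
  have hφw : ‖φ w‖ < 1 := mem_ball_zero_iff.mp (hm hw)
  set ψ : ℂ → ℂ := fun u => mob (φ w) (φ (mob w u)) with hψ
  have habs : ∀ x : ℂ, x ∈ ball (0:ℂ) 1 → ‖x‖ < 1 := fun x hx => mem_ball_zero_iff.mp hx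
  have hmem : ∀ x : ℂ, ‖x‖ < 1 → x ∈ ball (0:ℂ) 1 := fun x hx => mem_ball_zero_iff.mpr hx
  have hmw : Set.MapsTo (mob w) (ball (0:ℂ) 1) (ball (0:ℂ) 1) :=
    fun x hx => hmem _ (mob_maps hw' (habs _ hx))
  have hmφw : Set.MapsTo (mob (φ w)) (ball (0:ℂ) 1) (ball (0:ℂ) 1) :=
    fun x hx => hmem _ (mob_maps hφw (habs _ hx))
  have hdψ : DifferentiableOn ℂ ψ (ball (0:ℂ) 1) :=
    ((mob_diff hφw).comp hd hm).comp (mob_diff hw') hmw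
  have hmψ : Set.MapsTo ψ (ball (0:ℂ) 1) (ball (0:ℂ) 1) :=
    (hmφw.comp hm).comp hmw
  have hψ0 : ψ 0 = 0 := by
    simp only [hψ, mob_zero, mob_self]
  have := Complex.norm_le_norm_of_mapsTo_ball hdψ (hmψ.mono_right ball_subset_closedBall) hψ0 (mob_maps hw' hz')
  rw [hψ] at this
  simpa [mob_inv hw' hz'] using this

lemma add_one_ne {u : ℂ} (hu : 0 < u.re) : u + 1 ≠ 0 := by
  intro h
  have : (u + 1).re = 0 := by rw [h]; simp
  simp only [Complex.add_re, Complex.one_re] at this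
  linarith

lemma phi_maps {u : ℂ} (hu : 0 < u.re) : ‖(u - 1) / (u + 1)‖ < 1 := by
  have h1 : u + 1 ≠ 0 := add_one_ne hu
  have hk := key3 u 1
  simp only [map_one, Complex.one_re] at hk
  have h2 : normSq (u - 1) < normSq (u + 1) := by
    have e1 : normSq (1 + u) = normSq (u + 1) := by rw [add_comm]
    have e2 : normSq (1 - u) = normSq (u - 1) := by rw [← Complex.normSq_neg]; ring_nf
    rw [e1, e2] at hk
    nlinarith
  rw [norm_div, div_lt_one (norm_pos_iff.mpr h1)]
  exact normSq_lt_normSq_iff.mpr h2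

lemma herglotz_sp {q : ℂ → ℂ} (hd : DifferentiableOn ℂ q (ball (0:ℂ) 1))
    (hq : ∀ x ∈ ball (0:ℂ) 1, 0 < (q x).re) {z w : ℂ}
    (hz : z ∈ ball (0:ℂ) 1) (hw : w ∈ ball (0:ℂ) 1) :
    (1 - normSq z) * (1 - normSq w) * normSq ((starRingEnd ℂ) (q w) + q z)
      ≤ 4 * (q z).re * (q w).re * normSq (1 - (starRingEnd ℂ) w * z) := by
  have hz' : ‖z‖ < 1 := mem_ball_zero_iff.mp hz
  have hw' : ‖w‖ < 1 := mem_ball_zero_iff.mp hw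
  set φ : ℂ → ℂ := fun x => (q x - 1) / (q x + 1) with hφdef
  have hne : ∀ x ∈ ball (0:ℂ) 1, q x + 1 ≠ 0 := fun x hx => add_one_ne (hq x hx)
  have hdφ : DifferentiableOn ℂ φ (ball (0:ℂ) 1) :=
    (hd.sub (differentiableOn_const 1)).div (hd.add (differentiableOn_const 1)) hne
  have hmφ : Set.MapsTo φ (ball (0:ℂ) 1) (ball (0:ℂ) 1) :=
    fun x hx => mem_ball_zero_iff.mpr (phi_maps (hq x hx))
  have hsp := schwarz_pick hdφ hmφ hz hw
  have hsp2 : normSq (mob (φ w) (φ z)) ≤ normSq (mob w z) := by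
    rw [← Complex.sq_norm, ← Complex.sq_norm]
    exact pow_le_pow_left₀ (norm_nonneg _) hsp 2
  set u := q z with hu
  set v := q w with hv
  have hu1 : u + 1 ≠ 0 := hne z hz
  have hv1 : v + 1 ≠ 0 := hne w hw
  have hv1' : (starRingEnd ℂ) v + 1 ≠ 0 := by
    intro h; apply hv1
    have := congrArg (starRingEnd ℂ) h
    simpa using this
  have hφz : φ z = (u - 1) / (u + 1) := rfl
  have hφw : φ w = (v - 1) / (v + 1) := rfl
  have A1 : φ w - φ z = 2 * (v - u) / ((v + 1) * (u + 1)) := by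
    rw [hφz, hφw]; field_simp; ring
  have A2 : 1 - (starRingEnd ℂ) (φ w) * φ z
      = 2 * (u + (starRingEnd ℂ) v) / (((starRingEnd ℂ) v + 1) * (u + 1)) := by
    rw [hφz, hφw, map_div₀, map_sub, map_add, map_one]
    field_simp; ring
  have hzw : 1 - (starRingEnd ℂ) w * z ≠ 0 := mob_denom_ne hw' hz'
  have hφzw : 1 - (starRingEnd ℂ) (φ w) * φ z ≠ 0 :=
    mob_denom_ne (mem_ball_zero_iff.mp (hmφ hw)) (mem_ball_zero_iff.mp (hmφ hz))
  -- expand normSq of mob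
  have e1 : normSq (mob (φ w) (φ z))
      = (4 * normSq (v - u) / (normSq (v + 1) * normSq (u + 1)))
        / (4 * normSq (u + (starRingEnd ℂ) v) / (normSq (v + 1) * normSq (u + 1))) := by
    have hcc : normSq ((starRingEnd ℂ) v + 1) = normSq (v + 1) := by
      rw [show (starRingEnd ℂ) v + 1 = (starRingEnd ℂ) (v + 1) by simp, Complex.normSq_conj]
    rw [mob, map_div₀, A1, A2]
    simp only [map_div₀, map_mul]
    rw [hcc]
    norm_num [Complex.normSq_apply]
  have e2 : normSq (mob w z) = normSq (w - z) / normSq (1 - (starRingEnd ℂ) w * z) := by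
    rw [mob, map_div₀]
  have pos1 : 0 < normSq (v + 1) * normSq (u + 1) :=
    mul_pos (Complex.normSq_pos.mpr hv1) (Complex.normSq_pos.mpr hu1)
  have pos2 : 0 < normSq (1 - (starRingEnd ℂ) w * z) := Complex.normSq_pos.mpr hzw
  have pos3 : 0 < normSq (u + (starRingEnd ℂ) v) := by
    have : 2 * (u + (starRingEnd ℂ) v) / (((starRingEnd ℂ) v + 1) * (u + 1)) ≠ 0 := by
      rw [← A2]; exact hφzw
    have h4 : u + (starRingEnd ℂ) v ≠ 0 := by
      intro h; apply this; rw [h]; simp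
    exact Complex.normSq_pos.mpr h4
  rw [e1, e2] at hsp2
  -- clear denominators: get SP'' : normSq (v-u) * normSq (1-conj w z) ≤ normSq (w-z) * normSq (u + conj v)
  have SP2 : normSq (v - u) * normSq (1 - (starRingEnd ℂ) w * z)
      ≤ normSq (w - z) * normSq (u + (starRingEnd ℂ) v) := by
    have h5 : (4 * normSq (v - u) / (normSq (v + 1) * normSq (u + 1)))
        / (4 * normSq (u + (starRingEnd ℂ) v) / (normSq (v + 1) * normSq (u + 1)))
        = normSq (v - u) / normSq (u + (starRingEnd ℂ) v) := by
      rw [div_div_div_cancel_right₀ pos1.ne', mul_div_mul_left _ _ (by norm_num : (4:ℝ) ≠ 0)]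
    rw [h5] at hsp2
    rw [div_le_div_iff₀ pos3 pos2] at hsp2
    linarith
  have k1 := key1 w z
  have k3 := key3 u v
  have ecomm : normSq ((starRingEnd ℂ) v + u) = normSq (u + (starRingEnd ℂ) v) := by rw [add_comm]
  nlinarith [SP2, pos2, Complex.normSq_nonneg (w - z), Complex.normSq_nonneg (v - u)]

/-- A holomorphic function on the disk with nonnegative real part which attains
real part `0` is constant. -/
lemma const_of_re_zero {q : ℂ → ℂ} (hd : DifferentiableOn ℂ q (ball (0:ℂ) 1))
    (hre : ∀ x ∈ ball (0:ℂ) 1, 0 ≤ (q x).re) {z0 : ℂ} (hz0 : z0 ∈ ball (0:ℂ) 1)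
    (h0 : (q z0).re = 0) : ∀ z ∈ ball (0:ℂ) 1, q z = q z0 := by
  have han : AnalyticOnNhd ℂ q (ball (0:ℂ) 1) := hd.analyticOnNhd isOpen_ball
  rcases han.is_constant_or_isOpen (convex_ball (0:ℂ) 1).isPreconnected with ⟨v, hv⟩ | hopen
  · intro z hz; rw [hv z hz, hv z0 hz0]
  · exfalso
    have himg : IsOpen (q '' ball (0:ℂ) 1) := hopen _ subset_rfl isOpen_ball
    have hmem : q z0 ∈ q '' ball (0:ℂ) 1 := ⟨z0, hz0, rfl⟩
    rcases Metric.isOpen_iff.mp himg _ hmem with ⟨ε, hε, hsub⟩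
    have hmem2 : q z0 - (ε/2 : ℝ) ∈ ball (q z0) ε := by
      rw [mem_ball, dist_eq, sub_sub_cancel_left, norm_neg]
      rw [Complex.norm_real, Real.norm_eq_abs, abs_of_pos (by linarith)]
      linarith
    rcases hsub hmem2 with ⟨z1, hz1, hq1⟩
    have := hre z1 hz1
    rw [hq1] at this
    simp only [Complex.sub_re, Complex.ofReal_re, h0] at this
    linarith

lemma ball_mem_of_Ioo {ζ : ℂ} (hζ : ‖ζ‖ = 1) {r : ℝ} (hr : r ∈ Set.Ioo (0:ℝ) 1) :
    (r : ℂ) * ζ ∈ ball (0:ℂ) 1 := by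
  rw [mem_ball_zero_iff]
  simp only [norm_mul, Complex.norm_real, Real.norm_eq_abs, hζ, mul_one]
  rw [abs_of_pos hr.1]; exact hr.2

lemma julia {q : ℂ → ℂ} (hd : DifferentiableOn ℂ q (ball (0:ℂ) 1))
    (hre : ∀ x ∈ ball (0:ℂ) 1, 0 ≤ (q x).re) {ζ : ℂ} (hζ : ‖ζ‖ = 1) {c : ℝ}
    (hc : Tendsto (fun r : ℝ => (1 - (r:ℂ)) * q ((r:ℂ) * ζ))
      (nhdsWithin 1 (Set.Iio 1)) (nhds (c:ℂ))) :
    ∀ z ∈ ball (0:ℂ) 1, c * (1 - normSq z) ≤ 2 * (q z).re * normSq (ζ - z) := by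
  intro z hz
  have hz1 : normSq z < 1 := by
    have habs : ‖z‖ < 1 := by simpa using mem_ball_zero_iff.mp hz
    rw [← Complex.sq_norm]; nlinarith [norm_nonneg z]
  rcases le_or_gt c 0 with h | h
  · have : 0 ≤ 2 * (q z).re * normSq (ζ - z) :=
      mul_nonneg (by linarith [hre z hz]) (Complex.normSq_nonneg _)
    nlinarith
  have hIoo : ∀ᶠ r in nhdsWithin (1:ℝ) (Set.Iio 1), r ∈ Set.Ioo (0:ℝ) 1 :=
    Ioo_mem_nhdsLT_of_mem ⟨by norm_num, le_refl 1⟩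
  -- rule out the constant / boundary-zero case
  by_cases hq : ∀ x ∈ ball (0:ℂ) 1, 0 < (q x).re
  case neg =>
    push_neg at hq
    obtain ⟨x0, hx0, hx0re⟩ := hq
    have hx0re' : (q x0).re = 0 := le_antisymm hx0re (hre x0 hx0)
    have hconst := const_of_re_zero hd hre hx0 hx0re'
    have h2 : Tendsto (fun r : ℝ => (1 - (r:ℂ)) * q ((r:ℂ) * ζ))
        (nhdsWithin 1 (Set.Iio 1)) (nhds 0) := by
      have hbase : Tendsto (fun r : ℝ => 1 - (r:ℂ)) (nhdsWithin (1:ℝ) (Set.Iio 1)) (nhds 0) := by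
        have : Tendsto (fun r : ℝ => (r:ℂ)) (nhdsWithin (1:ℝ) (Set.Iio 1)) (nhds 1) :=
          (Complex.continuous_ofReal.tendsto 1).mono_left nhdsWithin_le_nhds
        have := (tendsto_const_nhds (x := (1:ℂ))).sub this
        simpa using this
      have := hbase.mul_const (q x0)
      rw [zero_mul] at this
      apply this.congr'
      filter_upwards [hIoo] with r hr
      rw [hconst _ (ball_mem_of_Ioo hζ hr)]
    have := tendsto_nhds_unique hc h2
    exfalso
    have : c = 0 := by exact_mod_cast this
    linarith
  case pos =>
  set A : ℝ → ℂ := fun r => (1 - (r:ℂ)) * q ((r:ℂ) * ζ) with hA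
  -- eventual inequality
  have hev : ∀ᶠ r in nhdsWithin (1:ℝ) (Set.Iio 1),
      (1 - normSq z) * (1 + r) * normSq ((starRingEnd ℂ) (A r) + (1 - (r:ℂ)) * q z)
        ≤ 4 * (q z).re * (A r).re * normSq (1 - (r:ℂ) * (starRingEnd ℂ) ζ * z) := by
    filter_upwards [hIoo] with r hr
    set w : ℂ := (r:ℂ) * ζ with hw
    have hwball : w ∈ ball (0:ℂ) 1 := ball_mem_of_Ioo hζ hr
    have hsp := herglotz_sp hd hq hz hwball
    have hnw : normSq w = r ^ 2 := by
      rw [hw, map_mul, Complex.normSq_ofReal, ← Complex.sq_norm, hζ]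
      ring
    have hcw : (starRingEnd ℂ) w = (r : ℂ) * (starRingEnd ℂ) ζ := by
      rw [hw, map_mul, Complex.conj_ofReal]
    have hAconj : (starRingEnd ℂ) (A r) = (1 - (r:ℂ)) * (starRingEnd ℂ) (q w) := by
      rw [hA]; simp only [map_mul, map_sub, map_one, Complex.conj_ofReal]; rfl
    have hone : (1 : ℂ) - (r:ℂ) = ((1 - r : ℝ) : ℂ) := by push_cast; ring
    have hAre : (A r).re = (1 - r) * (q w).re := by
      show ((1 - (r:ℂ)) * q w).re = _
      rw [hone, Complex.re_ofReal_mul]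
    have hnsA : normSq ((starRingEnd ℂ) (A r) + (1 - (r:ℂ)) * q z)
        = (1 - r) ^ 2 * normSq ((starRingEnd ℂ) (q w) + q z) := by
      rw [hAconj, ← mul_add, map_mul]
      rw [hone, Complex.normSq_ofReal]
      ring
    have h1r : 0 ≤ 1 - r := by linarith [hr.2]
    calc (1 - normSq z) * (1 + r) * normSq ((starRingEnd ℂ) (A r) + (1 - (r:ℂ)) * q z)
        = (1 - r) * ((1 - normSq z) * (1 - normSq w) * normSq ((starRingEnd ℂ) (q w) + q z)) := by
          rw [hnsA, hnw]; ring
      _ ≤ (1 - r) * (4 * (q z).re * (q w).re * normSq (1 - (starRingEnd ℂ) w * z)) :=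
          mul_le_mul_of_nonneg_left hsp h1r
      _ = 4 * (q z).re * (A r).re * normSq (1 - (r:ℂ) * (starRingEnd ℂ) ζ * z) := by
          rw [hAre, hcw]; ring
  -- limits of both sides
  have hrC : Tendsto (fun r : ℝ => (r:ℂ)) (nhdsWithin (1:ℝ) (Set.Iio 1)) (nhds 1) :=
    (Complex.continuous_ofReal.tendsto 1).mono_left nhdsWithin_le_nhds
  have hrR : Tendsto (fun r : ℝ => r) (nhdsWithin (1:ℝ) (Set.Iio 1)) (nhds 1) :=
    tendsto_id.mono_left nhdsWithin_le_nhds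
  have hL : Tendsto (fun r : ℝ =>
      (1 - normSq z) * (1 + r) * normSq ((starRingEnd ℂ) (A r) + (1 - (r:ℂ)) * q z))
      (nhdsWithin (1:ℝ) (Set.Iio 1)) (nhds ((1 - normSq z) * 2 * (c * c))) := by
    have h1 : Tendsto (fun r : ℝ => (starRingEnd ℂ) (A r) + (1 - (r:ℂ)) * q z)
        (nhdsWithin (1:ℝ) (Set.Iio 1)) (nhds ((c:ℂ))) := by
      have hconj : Tendsto (fun r : ℝ => (starRingEnd ℂ) (A r))
          (nhdsWithin (1:ℝ) (Set.Iio 1)) (nhds ((c:ℂ))) := by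
        have := (Complex.continuous_conj.tendsto ((c:ℝ):ℂ)).comp hc
        simpa [Complex.conj_ofReal, Function.comp_def] using this
      have hz2 : Tendsto (fun r : ℝ => (1 - (r:ℂ)) * q z)
          (nhdsWithin (1:ℝ) (Set.Iio 1)) (nhds 0) := by
        have := ((tendsto_const_nhds (x := (1:ℂ))).sub hrC).mul_const (q z)
        simpa using this
      simpa using hconj.add hz2
    have h2 : Tendsto (fun r : ℝ => normSq ((starRingEnd ℂ) (A r) + (1 - (r:ℂ)) * q z))
        (nhdsWithin (1:ℝ) (Set.Iio 1)) (nhds (c * c)) := by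
      have := (Complex.continuous_normSq.tendsto ((c:ℝ):ℂ)).comp h1
      simpa [Complex.normSq_ofReal, Function.comp_def] using this
    have h3 : Tendsto (fun r : ℝ => (1 - normSq z) * (1 + r))
        (nhdsWithin (1:ℝ) (Set.Iio 1)) (nhds ((1 - normSq z) * 2)) := by
      have := (tendsto_const_nhds (x := (1:ℝ))).add hrR
      have := (tendsto_const_nhds (x := 1 - normSq z)).mul this
      norm_num at this ⊢
      exact this
    exact h3.mul h2
  have hR : Tendsto (fun r : ℝ =>
      4 * (q z).re * (A r).re * normSq (1 - (r:ℂ) * (starRingEnd ℂ) ζ * z))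
      (nhdsWithin (1:ℝ) (Set.Iio 1))
      (nhds (4 * (q z).re * c * normSq (1 - (starRingEnd ℂ) ζ * z))) := by
    have h1 : Tendsto (fun r : ℝ => (A r).re) (nhdsWithin (1:ℝ) (Set.Iio 1)) (nhds c) := by
      have := (Complex.continuous_re.tendsto ((c:ℝ):ℂ)).comp hc
      simpa [Function.comp_def] using this
    have h2 : Tendsto (fun r : ℝ => normSq (1 - (r:ℂ) * (starRingEnd ℂ) ζ * z))
        (nhdsWithin (1:ℝ) (Set.Iio 1)) (nhds (normSq (1 - (starRingEnd ℂ) ζ * z))) := by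
      apply (Complex.continuous_normSq.tendsto _).comp
      have := ((hrC.mul (tendsto_const_nhds (x := (starRingEnd ℂ) ζ))).mul_const z)
      have := (tendsto_const_nhds (x := (1:ℂ))).sub this
      simpa using this
    exact (((tendsto_const_nhds (x := 4 * (q z).re)).mul h1)).mul h2
  have hlim : (1 - normSq z) * 2 * (c * c)
      ≤ 4 * (q z).re * c * normSq (1 - (starRingEnd ℂ) ζ * z) :=
    le_of_tendsto_of_tendsto hL hR hev
  have hns : normSq (1 - (starRingEnd ℂ) ζ * z) = normSq (ζ - z) := by
    have hζ1 : ζ * (starRingEnd ℂ) ζ = 1 := by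
      rw [Complex.mul_conj]
      norm_cast
      rw [← Complex.sq_norm, hζ]; norm_num
    have : ζ - z = ζ * (1 - (starRingEnd ℂ) ζ * z) := by
      rw [mul_sub, mul_one, ← mul_assoc, hζ1, one_mul]
    rw [this, map_mul]
    have : normSq ζ = 1 := by rw [← Complex.sq_norm, hζ]; norm_num
    rw [this, one_mul]
  rw [hns] at hlim
  nlinarith [hlim, h]

def TT (ζ z : ℂ) : ℂ := (ζ + z) / (ζ - z)

lemma unit_ne_ball {ζ z : ℂ} (hζ : ‖ζ‖ = 1) (hz : z ∈ ball (0:ℂ) 1) :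
    ζ - z ≠ 0 := by
  intro h
  have hz' : ‖z‖ < 1 := by simpa using mem_ball_zero_iff.mp hz
  have : ζ = z := by linear_combination h
  rw [this] at hζ; linarith

lemma TT_diff {ζ : ℂ} (hζ : ‖ζ‖ = 1) :
    DifferentiableOn ℂ (TT ζ) (ball (0:ℂ) 1) := by
  apply DifferentiableOn.div
  · exact (differentiableOn_const ζ).add differentiable_id.differentiableOn
  · exact (differentiableOn_const ζ).sub differentiable_id.differentiableOn
  · exact fun z hz => unit_ne_ball hζ hz

lemma TT_re {ζ z : ℂ} (hζ : ‖ζ‖ = 1) :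
    (TT ζ z).re = (1 - normSq z) / normSq (ζ - z) := by
  have h1 : normSq ζ = 1 := by rw [← Complex.sq_norm, hζ]; norm_num
  rw [TT, Complex.div_re, ← add_div]
  congr 1
  rw [Complex.normSq_apply] at h1
  simp only [Complex.add_re, Complex.sub_re, Complex.add_im, Complex.sub_im,
    Complex.normSq_apply]
  linear_combination h1

lemma TT_zero {ζ : ℂ} (hζ : ‖ζ‖ = 1) : TT ζ 0 = 1 := by
  have : ζ ≠ 0 := by intro h; rw [h] at hζ; simp at hζ
  simp [TT, this]

lemma radial_tendsto {ζ : ℂ} (hζ : ‖ζ‖ = 1) {M : ℝ} (hM : 1 < M) :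
    Tendsto (fun r : ℝ => (r:ℂ) * ζ) (nhdsWithin 1 (Set.Iio 1))
      (nhdsWithin ζ (StolzAngle ζ M)) := by
  rw [tendsto_nhdsWithin_iff]
  constructor
  · have : Tendsto (fun r : ℝ => (r:ℂ)) (nhdsWithin (1:ℝ) (Set.Iio 1)) (nhds 1) :=
      (Complex.continuous_ofReal.tendsto 1).mono_left nhdsWithin_le_nhds
    have := this.mul_const ζ
    simpa using this
  · filter_upwards [Ioo_mem_nhdsLT_of_mem (show (1:ℝ) ∈ Set.Ioc (0:ℝ) 1 by norm_num)]
      with r hr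
    have habs : ‖(r:ℂ) * ζ‖ = r := by
      rw [norm_mul, Complex.norm_real, Real.norm_eq_abs, hζ, mul_one, abs_of_pos hr.1]
    constructor
    · rw [habs]; exact hr.2
    · have : ζ - (r:ℂ) * ζ = ((1 - r : ℝ):ℂ) * ζ := by push_cast; ring
      rw [habs, this, norm_mul, Complex.norm_real, Real.norm_eq_abs, hζ, mul_one,
        abs_of_pos (by linarith [hr.2] : (0:ℝ) < 1 - r)]
      nlinarith [hr.2]

lemma stolz_neBot {ζ : ℂ} (hζ : ‖ζ‖ = 1) {M : ℝ} (hM : 1 < M) :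
    (nhdsWithin ζ (StolzAngle ζ M)).NeBot :=
  (radial_tendsto hζ hM).neBot

lemma stolz_subset_ball {ζ : ℂ} {M : ℝ} : StolzAngle ζ M ⊆ ball (0:ℂ) 1 := by
  intro z hz
  exact mem_ball_zero_iff.mpr (by simpa using hz.1)

lemma TT_radial_zero {ζ ζ' : ℂ} (hζ : ‖ζ‖ = 1) (hζ' : ‖ζ'‖ = 1)
    (hne : ζ' ≠ ζ) :
    Tendsto (fun r : ℝ => (1 - (r:ℂ)) * TT ζ' ((r:ℂ) * ζ)) (nhdsWithin 1 (Set.Iio 1))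
      (nhds 0) := by
  have hrC : Tendsto (fun r : ℝ => (r:ℂ)) (nhdsWithin (1:ℝ) (Set.Iio 1)) (nhds 1) :=
    (Complex.continuous_ofReal.tendsto 1).mono_left nhdsWithin_le_nhds
  have h1 : Tendsto (fun r : ℝ => 1 - (r:ℂ)) (nhdsWithin (1:ℝ) (Set.Iio 1)) (nhds 0) := by
    have := (tendsto_const_nhds (x := (1:ℂ))).sub hrC
    simpa using this
  have hzζ : Tendsto (fun r : ℝ => (r:ℂ) * ζ) (nhdsWithin (1:ℝ) (Set.Iio 1)) (nhds ζ) := by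
    have := hrC.mul_const ζ
    simpa using this
  have hden : ζ' - ζ ≠ 0 := sub_ne_zero.mpr hne
  have h2 : Tendsto (fun r : ℝ => TT ζ' ((r:ℂ) * ζ)) (nhdsWithin (1:ℝ) (Set.Iio 1))
      (nhds (TT ζ' ζ)) := by
    rw [TT]
    exact (((tendsto_const_nhds (x := ζ')).add hzζ).div
      ((tendsto_const_nhds (x := ζ')).sub hzζ) hden)
  have := h1.mul h2
  simpa using this

lemma term_calc {x ζc Mc : ℂ} (hx : x ≠ 0) (hζx : ζc - x ≠ 0) (hM : Mc ≠ 0) :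
    x⁻¹ * ((1 / Mc / 2) * ((ζc + x) / (ζc - x))) = 1 / Mc * (1 / (2 * x) - 1 / (x - ζc)) := by
  have hxζ : x - ζc ≠ 0 := fun h => hζx (by linear_combination -h)
  have h2 : (1:ℂ) / (x - ζc) = -(1 / (ζc - x)) := by
    rw [show x - ζc = -(ζc - x) by ring, div_neg]
  rw [h2]
  field_simp
  ring
lemma term_calc2 {x ζc Mc : ℂ} (hx : x ≠ 0) (hζx : ζc - x ≠ 0) (hM : Mc ≠ 0) :
    x * (1 / Mc * (1 / (2 * x) - 1 / (x - ζc))) = 1 / Mc * (1 / 2 - x / (x - ζc)) := by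
  have hxζ : x - ζc ≠ 0 := fun h => hζx (by linear_combination -h)
  have h2 : (1:ℂ) / (x - ζc) = -(1 / (ζc - x)) := by
    rw [show x - ζc = -(ζc - x) by ring, div_neg]
  have h3 : x / (x - ζc) = -(x / (ζc - x)) := by
    rw [show x - ζc = -(ζc - x) by ring, div_neg]
  rw [h2, h3]
  field_simp

lemma radial_alg {r ζc pc : ℂ} (hr : r ≠ 0) (hr1 : r - 1 ≠ 0) (hζ : ζc ≠ 0) (hp : pc ≠ 0) :
    -r / (r * ζc * pc / (r * ζc - ζc)) = (1 - r) * (1 / pc) := by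
  have hden : r * ζc - ζc ≠ 0 := by
    intro h
    rcases mul_eq_zero.mp (show (r - 1) * ζc = 0 by linear_combination h) with h' | h'
    exacts [hr1 h', hζ h']
  rw [div_div_eq_mul_div, div_eq_iff (mul_ne_zero (mul_ne_zero hr hζ) hp)]
  field_simp
  ring

lemma julia_multi {N : ℕ} (ζ : Fin N → ℂ) (hζ : ∀ n, ‖ζ n‖ = 1)
    (hinj : Function.Injective ζ) (c : Fin N → ℝ) {q : ℂ → ℂ}
    (hd : DifferentiableOn ℂ q (ball (0:ℂ) 1))
    (hre : ∀ x ∈ ball (0:ℂ) 1, 0 ≤ (q x).re)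
    (hrad : ∀ n, Tendsto (fun r : ℝ => (1 - (r:ℂ)) * q ((r:ℂ) * ζ n))
      (nhdsWithin 1 (Set.Iio 1)) (nhds ((c n : ℝ) : ℂ))) :
    ∀ s : Finset (Fin N),
      (∀ j, j ∉ s → Tendsto (fun r : ℝ => (1 - (r:ℂ)) *
          (q ((r:ℂ) * ζ j) - ∑ n ∈ s, ((c n / 2 : ℝ) : ℂ) * TT (ζ n) ((r:ℂ) * ζ j)))
        (nhdsWithin 1 (Set.Iio 1)) (nhds ((c j : ℝ) : ℂ))) ∧
      (∀ x ∈ ball (0:ℂ) 1, 0 ≤ (q x - ∑ n ∈ s, ((c n / 2 : ℝ) : ℂ) * TT (ζ n) x).re) := by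
  intro s
  induction s using Finset.induction_on with
  | empty =>
    constructor
    · intro j _
      simpa using hrad j
    · intro x hx
      simpa using hre x hx
  | @insert a s ha ih =>
    have hdT : ∀ n : Fin N, DifferentiableOn ℂ
        (fun x => ((c n / 2 : ℝ) : ℂ) * TT (ζ n) x) (ball (0:ℂ) 1) :=
      fun n => (differentiableOn_const _).mul (TT_diff (hζ n))
    set qs : ℂ → ℂ := fun x => q x - ∑ n ∈ s, ((c n / 2 : ℝ) : ℂ) * TT (ζ n) x with hqs
    have hds : DifferentiableOn ℂ qs (ball (0:ℂ) 1) :=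
      hd.sub (DifferentiableOn.fun_sum fun n _ => hdT n)
    have hres : ∀ x ∈ ball (0:ℂ) 1, 0 ≤ (qs x).re := ih.2
    have hrads := ih.1 a ha
    have hj := julia hds hres (hζ a) hrads
    constructor
    · intro j hj'
      have hjs : j ∉ s := fun h => hj' (Finset.mem_insert_of_mem h)
      have hja : ζ a ≠ ζ j := hinj.ne (fun h => hj' (h ▸ Finset.mem_insert_self a s))
      have h1 := ih.1 j hjs
      have h2 := TT_radial_zero (hζ j) (hζ a) hja
      have h3 := (tendsto_const_nhds (x := ((c a / 2 : ℝ) : ℂ))).mul h2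
      have := h1.sub h3
      rw [mul_zero, sub_zero] at this
      apply this.congr
      intro r
      rw [Finset.sum_insert ha]
      ring
    · intro x hx
      rw [Finset.sum_insert ha]
      have hTre : (TT (ζ a) x).re = (1 - normSq x) / normSq (ζ a - x) := TT_re (hζ a)
      have hns : 0 < normSq (ζ a - x) := Complex.normSq_pos.mpr (unit_ne_ball (hζ a) hx)
      have hineq := hj x hx
      have : (q x - (((c a / 2 : ℝ) : ℂ) * TT (ζ a) x + ∑ n ∈ s,
          ((c n / 2 : ℝ) : ℂ) * TT (ζ n) x)).re
          = (qs x).re - (c a / 2) * (TT (ζ a) x).re := by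
        simp only [hqs, Complex.sub_re, Complex.add_re, Complex.re_ofReal_mul]
        ring
      rw [this, hTre]
      have h4 : (c a / 2) * ((1 - normSq x) / normSq (ζ a - x)) ≤ (qs x).re := by
        rw [← mul_div_assoc, div_le_iff₀ hns]
        linarith
      linarith [h4]

/-- Corollary `c.simpler`: the dilation-case inequality
`∑ 1/|f'(ζ_n)| ≤ 2 Re (1/f'(0))` with the extremal case characterized. -/
theorem stmt8 (N : ℕ) (hN : 1 ≤ N) (p f : ℂ → ℂ)
    (hp : DifferentiableOn ℂ p (ball (0:ℂ) 1))
    (hre : ∀ z ∈ ball (0:ℂ) 1, 0 ≤ (p z).re)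
    (hf : ∀ z, f z = z * p z)
    (ζ : Fin N → ℂ) (hinj : Function.Injective ζ)
    (hζ : ∀ n, ‖ζ n‖ = 1)
    (m : Fin N → ℝ) (hm : ∀ n, m n < 0)
    (hder : ∀ n, AngularLimit (fun z => f z / (z - ζ n)) (ζ n) ((m n : ℝ) : ℂ)) :
    (∑ n, 1 / |m n|) ≤ 2 * (1 / p 0).re ∧
    ((∑ n, 1 / |m n|) = 2 * (1 / p 0).re ↔
      ∃ c : ℝ, ∀ z ∈ ball (0:ℂ) 1, z ≠ 0 →
        1 / f z =
          (∑ n, (1 / ((|m n| : ℝ) : ℂ)) * (1 / (2 * z) - 1 / (z - ζ n)))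
            + Complex.I * (c : ℂ) / z) := by
  have hball0 : (0:ℂ) ∈ ball (0:ℂ) 1 := by simp
  set n0 : Fin N := ⟨0, hN⟩ with hn0
  -- `p` never vanishes on the disk
  have pne : ∀ x ∈ ball (0:ℂ) 1, p x ≠ 0 := by
    intro x hx hpx
    have h0 : (p x).re = 0 := by rw [hpx]; simp
    have hconst := const_of_re_zero hp hre hx h0
    haveI : (nhdsWithin (ζ n0) (StolzAngle (ζ n0) 2)).NeBot := stolz_neBot (hζ n0) one_lt_two
    have hlim := hder n0 2 one_lt_two
    have h1 : Tendsto (fun z : ℂ => f z / (z - ζ n0))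
        (nhdsWithin (ζ n0) (StolzAngle (ζ n0) 2)) (nhds 0) := by
      apply tendsto_const_nhds.congr'
      filter_upwards [self_mem_nhdsWithin] with y hy
      rw [hf y, hconst y (stolz_subset_ball hy), hpx]
      simp
    have := tendsto_nhds_unique hlim h1
    have : m n0 = 0 := by exact_mod_cast this
    linarith [hm n0]
  set q : ℂ → ℂ := fun x => 1 / p x with hqdef
  have hq : DifferentiableOn ℂ q (ball (0:ℂ) 1) :=
    (differentiableOn_const 1).div hp pne
  have hqre : ∀ x ∈ ball (0:ℂ) 1, 0 ≤ (q x).re := by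
    intro x hx
    have : (q x).re = (p x).re / normSq (p x) := by
      rw [hqdef]; simp only [one_div, Complex.inv_re]
    rw [this]
    exact div_nonneg (hre x hx) (Complex.normSq_nonneg _)
  set c : Fin N → ℝ := fun n => 1 / |m n| with hcdef
  have hmne : ∀ n, m n ≠ 0 := fun n => (hm n).ne
  have habs : ∀ n, |m n| = -(m n) := fun n => abs_of_neg (hm n)
  have habsne : ∀ n, (|m n| : ℝ) ≠ 0 := fun n => abs_ne_zero.mpr (hmne n)
  have hζne0 : ∀ n, ζ n ≠ 0 := by
    intro n h
    have := hζ n; rw [h] at this; simp at this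
  -- radial limits of (1-r) q(r ζ n)
  have hrad : ∀ n, Tendsto (fun r : ℝ => (1 - (r:ℂ)) * q ((r:ℂ) * ζ n))
      (nhdsWithin 1 (Set.Iio 1)) (nhds ((c n : ℝ) : ℂ)) := by
    intro n
    have hcomp : Tendsto (fun r : ℝ => f ((r:ℂ) * ζ n) / ((r:ℂ) * ζ n - ζ n))
        (nhdsWithin 1 (Set.Iio 1)) (nhds ((m n : ℝ) : ℂ)) :=
      (hder n 2 one_lt_two).comp (radial_tendsto (hζ n) one_lt_two)
    have hmC : ((m n : ℝ) : ℂ) ≠ 0 := Complex.ofReal_ne_zero.mpr (hmne n)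
    have hneg : Tendsto (fun r : ℝ => -((r:ℂ)))
        (nhdsWithin (1:ℝ) (Set.Iio 1)) (nhds (-1)) := by
      exact ((Complex.continuous_ofReal.tendsto 1).mono_left nhdsWithin_le_nhds).neg
    have hdiv := hneg.div hcomp hmC
    have hc1 : ((c n : ℝ) : ℂ) = (-1) / ((m n : ℝ) : ℂ) := by
      rw [hcdef]
      simp only [habs n]
      push_cast
      field_simp
    rw [← hc1] at hdiv
    apply hdiv.congr'
    filter_upwards [Ioo_mem_nhdsLT_of_mem (show (1:ℝ) ∈ Set.Ioc (0:ℝ) 1 by norm_num)]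
      with r hr
    simp only [Pi.div_apply]
    have hrb : (r:ℂ) * ζ n ∈ ball (0:ℂ) 1 := ball_mem_of_Ioo (hζ n) hr
    have hpr := pne _ hrb
    have hr0 : (r:ℂ) ≠ 0 := Complex.ofReal_ne_zero.mpr hr.1.ne'
    have hr1 : (r:ℂ) - 1 ≠ 0 := by
      intro h
      have : (r:ℂ) = 1 := by linear_combination h
      have : r = 1 := by exact_mod_cast this
      linarith [hr.2]
    rw [hf ((r:ℂ) * ζ n), hqdef]
    exact radial_alg hr0 hr1 (hζne0 n) hpr
  -- the multi-point Julia inequality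
  have hmulti := (julia_multi ζ hζ hinj c hq hqre hrad Finset.univ).2
  -- evaluate at 0
  have hsum0 : (∑ n, ((c n / 2 : ℝ) : ℂ) * TT (ζ n) 0) = ((∑ n, c n / 2 : ℝ) : ℂ) := by
    push_cast
    apply Finset.sum_congr rfl
    intro n _
    rw [TT_zero (hζ n), mul_one]
  have hmain : ∑ n, c n / 2 ≤ (q 0).re := by
    have h0 := hmulti 0 hball0
    rw [hsum0] at h0
    simp only [Complex.sub_re, Complex.ofReal_re] at h0
    linarith
  have hq0 : (q 0).re = (1 / p 0).re := rfl
  have hsumc : (∑ n, (1:ℝ) / |m n|) = ∑ n, c n := by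
    apply Finset.sum_congr rfl; intro n _; rw [hcdef]
  have hhalf : (∑ n, c n) = 2 * ∑ n, c n / 2 := by
    rw [Finset.mul_sum]
    apply Finset.sum_congr rfl; intro n _; ring
  constructor
  · rw [hsumc, hhalf, ← hq0]
    linarith [hmain]
  constructor
  · -- equality implies the formula
    intro heq
    set h : ℂ → ℂ := fun x => q x - ∑ n, ((c n / 2 : ℝ) : ℂ) * TT (ζ n) x with hhdef
    have hdh : DifferentiableOn ℂ h (ball (0:ℂ) 1) :=
      hq.sub (DifferentiableOn.fun_sum fun n _ =>
        (differentiableOn_const _).mul (TT_diff (hζ n)))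
    have hreh : ∀ x ∈ ball (0:ℂ) 1, 0 ≤ (h x).re := hmulti
    have h0re : (h 0).re = 0 := by
      rw [hhdef]
      simp only [Complex.sub_re]
      rw [hsum0]
      simp only [Complex.ofReal_re]
      rw [hsumc, hhalf, ← hq0] at heq
      linarith
    have hconst := const_of_re_zero hdh hreh hball0 h0re
    refine ⟨(h 0).im, ?_⟩
    intro x hx hx0
    have hxformula : q x = ∑ n, ((c n / 2 : ℝ) : ℂ) * TT (ζ n) x
        + Complex.I * ((h 0).im : ℂ) := by
      have h1 := hconst x hx
      have h2 : h 0 = Complex.I * ((h 0).im : ℂ) := by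
        apply Complex.ext
        · simp [h0re]
        · simp
      rw [h2] at h1
      rw [hhdef] at h1
      linear_combination h1
    have hfx : 1 / f x = x⁻¹ * q x := by
      rw [hf x, hqdef]
      field_simp
    rw [hfx, hxformula, mul_add, Finset.mul_sum]
    congr 1
    · apply Finset.sum_congr rfl
      intro n _
      have hxζ : ζ n - x ≠ 0 := unit_ne_ball (hζ n) hx
      have hxζ' : x - ζ n ≠ 0 := by
        intro hh; apply hxζ; linear_combination -hh
      have hcast : ((c n / 2 : ℝ) : ℂ) = 1 / ((|m n| : ℝ) : ℂ) / 2 := by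
        rw [hcdef]; push_cast; ring
      rw [hcast, TT]
      exact term_calc hx0 hxζ (Complex.ofReal_ne_zero.mpr (habsne n))
    · rw [div_eq_mul_inv]
      ring
  · -- the formula implies equality
    rintro ⟨cc, hcc⟩
    set G : ℂ → ℂ := fun x =>
      (∑ n, (1 / ((|m n| : ℝ) : ℂ)) * (1/2 - x / (x - ζ n))) + Complex.I * (cc : ℂ)
      with hGdef
    have hEq : Set.EqOn q G (ball (0:ℂ) 1 \ {0}) := by
      intro x hx
      have hx1 : x ∈ ball (0:ℂ) 1 := hx.1
      have hx0 : x ≠ 0 := hx.2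
      have h1 := hcc x hx1 hx0
      have hfx : q x = x * (1 / f x) := by
        rw [hf x, hqdef]
        field_simp [pne x hx1]
      rw [hfx, h1, mul_add, Finset.mul_sum, hGdef]
      congr 1
      · apply Finset.sum_congr rfl
        intro n _
        have hxζ : ζ n - x ≠ 0 := unit_ne_ball (hζ n) hx1
        exact term_calc2 hx0 hxζ (Complex.ofReal_ne_zero.mpr (habsne n))
      · field_simp
    haveI hne : (nhdsWithin (0:ℂ) (ball (0:ℂ) 1 \ {0})).NeBot := by
      have hrw : ball (0:ℂ) 1 \ {0} = {(0:ℂ)}ᶜ ∩ ball (0:ℂ) 1 := by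
        rw [Set.diff_eq, Set.inter_comm]
      rw [hrw, ← nhdsWithin_restrict' _ (ball_mem_nhds (0:ℂ) one_pos)]
      exact Module.punctured_nhds_neBot ℝ ℂ 0
    have hqt : Tendsto q (nhdsWithin (0:ℂ) (ball (0:ℂ) 1 \ {0})) (nhds (q 0)) := by
      have hcont : ContinuousWithinAt q (ball (0:ℂ) 1) 0 :=
        (hq.continuousOn) 0 hball0
      exact hcont.mono Set.diff_subset
    have hGt : Tendsto G (nhdsWithin (0:ℂ) (ball (0:ℂ) 1 \ {0})) (nhds (G 0)) := by
      have hcont : ContinuousAt G 0 := by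
        rw [hGdef]
        apply ContinuousAt.add _ continuousAt_const
        apply tendsto_finset_sum
        intro n _
        apply ContinuousAt.mul continuousAt_const
        apply ContinuousAt.sub continuousAt_const
        have hden : ((0:ℂ) - ζ n) ≠ 0 := by
          simpa using hζne0 n
        exact ContinuousAt.div continuousAt_id
          ((continuous_id.sub continuous_const).continuousAt) hden
      exact hcont.continuousWithinAt
    have hlim := tendsto_nhds_unique (hqt.congr' ?evq) hGt
    case evq =>
      filter_upwards [self_mem_nhdsWithin] with y hy
      exact hEq hy
    -- take real parts at 0
    have hG0 : (G 0).re = ∑ n, (1 / |m n|) / 2 := by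
      rw [hGdef]
      simp only [Complex.add_re]
      rw [Complex.re_sum]
      have hterm : ∀ n : Fin N, ((1 / ((|m n| : ℝ) : ℂ)) * (1/2 - (0:ℂ) / (0 - ζ n))).re
          = (1 / |m n|) / 2 := by
        intro n
        rw [zero_div, sub_zero]
        rw [show (1 / ((|m n| : ℝ) : ℂ)) * (1/2 : ℂ) = (((1 / |m n|) / 2 : ℝ) : ℂ) by
          push_cast; ring]
        exact Complex.ofReal_re _
      rw [Finset.sum_congr rfl (fun n _ => hterm n)]
      simp
    rw [hlim, hG0] at hq0
    rw [hsumc, ← hq0, Finset.mul_sum]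
    exact Finset.sum_congr rfl fun n _ => by rw [hcdef]; ring
end
end

section
/- Let f be a holomorphic generator on 𝔻 with Denjoy–Wolff point a = 0, i.e. f(z) = z·p(z) with p holomorphic and Re p ≥ 0 on 𝔻, and let ζ_1, …, ζ_N (N ≥ 1) be pairwise distinct boundary regular null points of f with f'(ζ_n) = ∠lim_{z→ζ_n} f(z)/(z − ζ_n) < 0 real (then necessarily f'(0) = p(0) satisfies Re f'(0) > 0). Set C = Re(1/f'(0)) − (1/2)·Σ_{n=1}^{N} 1/|f'(ζ_n)|. Then for all z ∈ 𝔻 with z ≠ 0: C·(1 − |z|)/(1 + |z|) ≤ | z·( 1/f(z) − Σ_{n=1}^{N} (1/|f'(ζ_n)|)·(1/(2z) − 1/(z − ζ_n)) ) − i·Im(1/f'(0)) | ≤ C·(1 + |z|)/(1 − |z|). -/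
open Complex Filter Metric Finset

noncomputable section

section Aux
open Set

lemma nsq_sub' (a b : ℂ) : normSq (a - b) = normSq a - 2*(a*(starRingEnd ℂ) b).re + normSq b := by
  simp [normSq_apply, Complex.sub_re, Complex.sub_im, Complex.mul_re, Complex.mul_im]; ring

lemma nsq_addconj (a b : ℂ) : normSq (a + (starRingEnd ℂ) b) = normSq a + 2*(a*b).re + normSq b := by
  simp [normSq_apply, Complex.add_re, Complex.add_im, Complex.mul_re, Complex.mul_im]; ring

lemma nsq_moebius (w z : ℂ) :
    normSq (1 - (starRingEnd ℂ) w * z) - normSq (z - w) = (1 - normSq z) * (1 - normSq w) := by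
  simp [normSq_apply, Complex.sub_re, Complex.sub_im, Complex.mul_re, Complex.mul_im]; ring

lemma nsq_moebius' (w u : ℂ) :
    normSq (1 + (starRingEnd ℂ) w * u) - normSq (u + w) = (1 - normSq u) * (1 - normSq w) := by
  simp [normSq_apply, Complex.add_re, Complex.add_im, Complex.mul_re, Complex.mul_im]; ring

lemma abs_lt_abs_of_nsq {x y : ℂ} (h : normSq x < normSq y) : ‖x‖ < ‖y‖ := by
  have hx : ‖x‖ ^ 2 < ‖y‖ ^ 2 := by rw [Complex.sq_norm, Complex.sq_norm]; exact h
  nlinarith [norm_nonneg x, norm_nonneg y]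

lemma cmul_self_norm (z : ℂ) : ‖z‖ * ‖z‖ = normSq z := by rw [← sq, Complex.sq_norm]

lemma const_of_re_eq_zero {h : ℂ → ℂ} (hd : DifferentiableOn ℂ h (ball (0:ℂ) 1))
    (hre : ∀ z ∈ ball (0:ℂ) 1, 0 ≤ (h z).re) {z₀ : ℂ} (hz₀ : z₀ ∈ ball (0:ℂ) 1)
    (h0 : (h z₀).re = 0) : ∀ z ∈ ball (0:ℂ) 1, h z = h z₀ := by
  have han : AnalyticOnNhd ℂ h (ball (0:ℂ) 1) := hd.analyticOnNhd isOpen_ball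
  rcases han.is_constant_or_isOpen (convex_ball (0:ℂ) 1).isPreconnected with ⟨w, hw⟩ | hopen
  · intro z hz; rw [hw z hz, hw z₀ hz₀]
  · exfalso
    have ho : IsOpen (h '' ball (0:ℂ) 1) := hopen _ subset_rfl isOpen_ball
    obtain ⟨ε, hε, hball⟩ := Metric.isOpen_iff.mp ho (h z₀) ⟨z₀, hz₀, rfl⟩
    have hmem : h z₀ - (ε/2 : ℝ) ∈ ball (h z₀) ε := by
      simp [Complex.dist_eq, Complex.norm_real, Real.norm_eq_abs, abs_of_pos hε]
      linarith
    obtain ⟨z', hz', hzw⟩ := hball hmem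
    have : (h z').re = -(ε/2) := by rw [hzw]; simp [h0]
    have := hre z' hz'
    linarith

lemma one_add_ne_zero_of_abs_lt {x : ℂ} (h : ‖x‖ < 1) : (1:ℂ) + x ≠ 0 := by
  intro hc
  have : x = -1 := by linear_combination hc
  rw [this] at h; simp at h

lemma one_sub_ne_zero_of_abs_lt {x : ℂ} (h : ‖x‖ < 1) : (1:ℂ) - x ≠ 0 := by
  intro hc
  have : x = 1 := by linear_combination -hc
  rw [this] at h; simp at h

lemma herglotz_pick {q : ℂ → ℂ} (hd : DifferentiableOn ℂ q (ball (0:ℂ) 1))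
    (hq : ∀ z ∈ ball (0:ℂ) 1, 0 < (q z).re) {z w : ℂ}
    (hz : z ∈ ball (0:ℂ) 1) (hw : w ∈ ball (0:ℂ) 1) :
    ‖q z - q w‖ * ‖1 - (starRingEnd ℂ) w * z‖
      ≤ ‖z - w‖ * ‖q z + (starRingEnd ℂ) (q w)‖ := by
  have hz' : ‖z‖ < 1 := by rwa [mem_ball_zero_iff] at hz
  have hw' : ‖w‖ < 1 := by rwa [mem_ball_zero_iff] at hw
  set φ : ℂ → ℂ := fun u => (u + w) / (1 + (starRingEnd ℂ) w * u) with hφ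
  have hden : ∀ u ∈ ball (0:ℂ) 1, (1:ℂ) + (starRingEnd ℂ) w * u ≠ 0 := by
    intro u hu
    rw [mem_ball_zero_iff] at hu
    apply one_add_ne_zero_of_abs_lt
    rw [norm_mul, Complex.norm_conj]
    calc ‖w‖ * ‖u‖ ≤ ‖w‖ * 1 :=
      mul_le_mul_of_nonneg_left (le_of_lt hu) (norm_nonneg w)
    _ < 1 := by rwa [mul_one]
  have hmaps : MapsTo φ (ball (0:ℂ) 1) (ball (0:ℂ) 1) := by
    intro u hu
    have hu' : ‖u‖ < 1 := by rwa [mem_ball_zero_iff] at hu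
    rw [mem_ball_zero_iff]
    show ‖(u + w) / (1 + (starRingEnd ℂ) w * u)‖ < 1
    rw [norm_div, div_lt_one]
    · show ‖_‖ < ‖_‖
      apply abs_lt_abs_of_nsq
      have := nsq_moebius' w u
      have h1 : normSq u < 1 := by rw [← Complex.sq_norm]; nlinarith [norm_nonneg u, norm_nonneg w, norm_nonneg z]
      have h2 : normSq w < 1 := by rw [← Complex.sq_norm]; nlinarith [norm_nonneg u, norm_nonneg w, norm_nonneg z]
      nlinarith
    · exact norm_pos_iff.mpr (hden u hu)
  have hφd : DifferentiableOn ℂ φ (ball (0:ℂ) 1) := by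
    apply DifferentiableOn.div
    · exact (differentiable_id.add_const w).differentiableOn
    · exact ((differentiable_const _).mul differentiable_id).const_add 1 |>.differentiableOn
    · exact hden
  have hφ0 : φ 0 = w := by simp [hφ]
  set b := q w with hb
  have hbre : 0 < b.re := hq w hw
  have hdq : ∀ u ∈ ball (0:ℂ) 1, q (φ u) + (starRingEnd ℂ) b ≠ 0 := by
    intro u hu
    have h1 : 0 < (q (φ u) + (starRingEnd ℂ) b).re := by
      rw [Complex.add_re, Complex.conj_re]
      have := hq _ (hmaps hu)
      linarith
    intro hc; rw [hc] at h1; simp at h1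
  set G : ℂ → ℂ := fun u => (q (φ u) - b) / (q (φ u) + (starRingEnd ℂ) b) with hG
  have hGd : DifferentiableOn ℂ G (ball (0:ℂ) 1) := by
    apply DifferentiableOn.div
    · exact (hd.comp hφd hmaps).sub (differentiableOn_const b)
    · exact (hd.comp hφd hmaps).add (differentiableOn_const _)
    · exact hdq
  have hG0 : G 0 = 0 := by simp [hG, hφ0, hb]
  have hGmaps : MapsTo G (ball (0:ℂ) 1) (ball (0:ℂ) 1) := by
    intro u hu
    rw [mem_ball_zero_iff]
    show ‖(q (φ u) - b) / (q (φ u) + (starRingEnd ℂ) b)‖ < 1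
    rw [norm_div, div_lt_one]
    · show ‖_‖ < ‖_‖
      apply abs_lt_abs_of_nsq
      have h1 := nsq_sub' (q (φ u)) b
      have h2 := nsq_addconj (q (φ u)) b
      have h3 : 0 < (q (φ u)).re := hq _ (hmaps hu)
      have h4 : ((q (φ u)) * b).re + ((q (φ u)) * (starRingEnd ℂ) b).re
          = 2 * (q (φ u)).re * b.re := by
        simp [Complex.mul_re, Complex.conj_re, Complex.conj_im]; ring
      nlinarith
    · exact norm_pos_iff.mpr (hdq u hu)
  set u₀ : ℂ := (z - w) / (1 - (starRingEnd ℂ) w * z) with hu₀def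
  have hden0 : (1:ℂ) - (starRingEnd ℂ) w * z ≠ 0 := by
    apply one_sub_ne_zero_of_abs_lt
    rw [norm_mul, Complex.norm_conj]
    calc ‖w‖ * ‖z‖ ≤ ‖w‖ * 1 :=
      mul_le_mul_of_nonneg_left (le_of_lt hz') (norm_nonneg w)
    _ < 1 := by rwa [mul_one]
  have hu₀ : u₀ ∈ ball (0:ℂ) 1 := by
    rw [mem_ball_zero_iff]
    show ‖(z - w) / (1 - (starRingEnd ℂ) w * z)‖ < 1
    rw [norm_div, div_lt_one]
    · show ‖_‖ < ‖_‖
      apply abs_lt_abs_of_nsq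
      have := nsq_moebius w z
      have h1 : normSq z < 1 := by rw [← Complex.sq_norm]; nlinarith [norm_nonneg z]
      have h2 : normSq w < 1 := by rw [← Complex.sq_norm]; nlinarith [norm_nonneg w]
      nlinarith
    · exact norm_pos_iff.mpr hden0
  have hnum : u₀ + w = z * (1 + (starRingEnd ℂ) w * u₀) := by
    have hu : u₀ * (1 - (starRingEnd ℂ) w * z) = z - w := by
      rw [hu₀def]; exact div_mul_cancel₀ _ hden0
    linear_combination hu
  have hφu₀ : φ u₀ = z := by
    rw [hφ]
    exact (div_eq_iff (hden u₀ hu₀)).mpr hnum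
  have habs : ‖G u₀‖ ≤ ‖u₀‖ :=
    Complex.norm_le_norm_of_mapsTo_ball hGd (hGmaps.mono_right ball_subset_closedBall) hG0 (by rwa [mem_ball_zero_iff] at hu₀)
  rw [hG] at habs
  simp only at habs
  rw [hφu₀, hu₀def, norm_div, norm_div] at habs
  have hpos1 : 0 < ‖q z + (starRingEnd ℂ) b‖ := by
    rw [norm_pos_iff]
    intro hc
    have h1 : 0 < (q z + (starRingEnd ℂ) b).re := by
      rw [Complex.add_re, Complex.conj_re]; have := hq z hz; linarith
    rw [hc] at h1; simp at h1
  have hpos2 : 0 < ‖1 - (starRingEnd ℂ) w * z‖ := norm_pos_iff.mpr hden0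
  rw [div_le_div_iff₀ hpos1 hpos2] at habs
  exact habs


variable {q : ℂ → ℂ}

lemma herglotz_julia (hd : DifferentiableOn ℂ q (ball (0:ℂ) 1))
    (hq : ∀ z ∈ ball (0:ℂ) 1, 0 ≤ (q z).re) {ζ : ℂ} (hζ : ‖ζ‖ = 1)
    {c : ℝ} (hc : 0 ≤ c)
    (hlim : Tendsto (fun r : ℝ => ((1 - r : ℝ) : ℂ) * q ((r:ℂ) * ζ))
      (nhdsWithin 1 (Set.Iio 1)) (nhds (((2*c : ℝ) : ℂ)))) :
    ∀ z ∈ ball (0:ℂ) 1, 0 ≤ (q z - (c:ℂ) * ((ζ + z)/(ζ - z))).re := by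
  have hIoo : Set.Ioo (0:ℝ) 1 ∈ nhdsWithin (1:ℝ) (Set.Iio 1) :=
    Ioo_mem_nhdsLT_of_mem ⟨zero_lt_one, le_rfl⟩
  have hζnsq : normSq ζ = 1 := by rw [← Complex.sq_norm, hζ]; norm_num
  have hrball : ∀ r : ℝ, r ∈ Set.Ioo (0:ℝ) 1 → (r:ℂ) * ζ ∈ ball (0:ℂ) 1 := by
    intro r hr
    rw [mem_ball_zero_iff]
    show ‖_‖ < 1
    rw [norm_mul, Complex.norm_real, Real.norm_eq_abs, hζ, mul_one, abs_of_pos hr.1]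
    exact hr.2
  rcases eq_or_lt_of_le hc with hc0 | hcpos
  · intro z hz
    rw [← hc0]
    simpa using hq z hz
  -- strict positivity of Re q
  have hqpos : ∀ z ∈ ball (0:ℂ) 1, 0 < (q z).re := by
    by_contra hcon
    push_neg at hcon
    obtain ⟨z₀, hz₀, hle⟩ := hcon
    have h0 : (q z₀).re = 0 := le_antisymm hle (hq z₀ hz₀)
    have hconst := const_of_re_eq_zero hd hq hz₀ h0
    have h1 : Tendsto (fun r : ℝ => ((1 - r : ℝ) : ℂ) * q ((r:ℂ) * ζ))
        (nhdsWithin 1 (Set.Iio 1)) (nhds 0) := by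
      have h2 : Tendsto (fun r : ℝ => ((1 - r : ℝ) : ℂ) * q z₀)
          (nhdsWithin 1 (Set.Iio 1)) (nhds 0) := by
        have h3 : Tendsto (fun r : ℝ => ((1 - r : ℝ) : ℂ)) (nhdsWithin 1 (Set.Iio 1)) (nhds 0) := by
          have : Continuous (fun r : ℝ => ((1 - r : ℝ) : ℂ)) :=
            Complex.continuous_ofReal.comp (continuous_const.sub continuous_id)
          have h4 := this.tendsto 1
          simp only [sub_self, Complex.ofReal_zero] at h4
          exact h4.mono_left nhdsWithin_le_nhds
        simpa using h3.mul tendsto_const_nhds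
      apply h2.congr'
      filter_upwards [hIoo] with r hr
      rw [hconst _ (hrball r hr)]
    have := tendsto_nhds_unique hlim h1
    have h5 : (2*c : ℝ) = 0 := by exact_mod_cast this
    linarith
  intro z hz
  have hz' : ‖z‖ < 1 := by rwa [mem_ball_zero_iff] at hz
  have hznsq : normSq z < 1 := by rw [← Complex.sq_norm]; nlinarith [norm_nonneg z]
  have hzζ : ζ - z ≠ 0 := by
    intro h; have : ζ = z := by linear_combination h
    rw [← this] at hz'; rw [hζ] at hz'; linarith
  have hnsqζz : 0 < normSq (ζ - z) := normSq_pos.mpr hzζ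
  set a := q z with ha
  -- the limit inequality: A * c ≤ a.re
  have hmain : (1 - normSq z)/normSq (ζ - z) * c ≤ a.re := by
    set u : ℝ → ℂ := fun r => ((1 - r : ℝ) : ℂ) * q ((r:ℂ) * ζ) with hu
    set D : ℝ → ℝ := fun r =>
      normSq (z - (r:ℂ)*ζ) / normSq (1 - (starRingEnd ℂ) ((r:ℂ)*ζ) * z) with hD
    set lhs : ℝ → ℝ := fun r =>
      ((1+r)*(1-normSq z)/normSq (1 - (starRingEnd ℂ) ((r:ℂ)*ζ) * z)) * normSq (u r) with hlhs
    set rhs : ℝ → ℝ := fun r =>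
      (D r - 1)*(1-r)*normSq a + 2*(a*(starRingEnd ℂ) (u r)).re + 2*(D r)*((a*(u r)).re)
      with hrhs
    -- pointwise inequality
    have hineq : ∀ᶠ r in nhdsWithin (1:ℝ) (Set.Iio 1), lhs r ≤ rhs r := by
      filter_upwards [hIoo] with r hr
      set w : ℂ := (r:ℂ)*ζ with hw
      have hwball := hrball r hr
      have hwnsq : normSq w = r^2 := by
        rw [hw, normSq_mul, normSq_ofReal, hζnsq]; ring
      have hdenne : (1:ℂ) - (starRingEnd ℂ) w * z ≠ 0 := by
        intro hcon
        have h6 : normSq ((1:ℂ) - (starRingEnd ℂ) w * z) = 0 := by rw [hcon]; simp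
        have h7 := nsq_moebius w z
        rw [h6, hwnsq] at h7
        have h8 : normSq (z - w) ≥ 0 := normSq_nonneg _
        nlinarith [h8, mul_pos (sub_pos.mpr hznsq)
          (by nlinarith [hr.1, hr.2] : (0:ℝ) < 1 - r^2)]
      have hB : 0 < normSq (1 - (starRingEnd ℂ) w * z) := normSq_pos.mpr hdenne
      set B := normSq (1 - (starRingEnd ℂ) w * z) with hBdef
      set P := normSq (z - w) with hPdef
      have hBP : B - P = (1 - normSq z) * (1 - r^2) := by
        rw [hBdef, hPdef, ← hwnsq]; exact nsq_moebius w z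
      set W := q w with hW
      -- squared Herglotz-Pick
      have key := herglotz_pick hd hqpos hz hwball
      have keysq : normSq (a - W) * B ≤ P * normSq (a + (starRingEnd ℂ) W) := by
        have h1 := mul_le_mul key key (by positivity) (by positivity)
        rw [mul_mul_mul_comm, cmul_self_norm, cmul_self_norm,
          mul_mul_mul_comm, cmul_self_norm, cmul_self_norm] at h1
        exact h1
      -- expansions
      have hE1 := nsq_sub' a W
      have hE2 := nsq_addconj a W
      set x := (a*(starRingEnd ℂ) W).re with hx
      set y := (a*W).re with hy
      set t := (1:ℝ) - r with ht
      have htpos : 0 < t := by rw [ht]; linarith [hr.2]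
      have hur : u r = ((t:ℝ):ℂ) * W := by rw [hu]
      have hnsqu : normSq (u r) = t^2 * normSq W := by
        rw [hur, normSq_mul, normSq_ofReal]; ring
      have hconj : (a * (starRingEnd ℂ) (u r)).re = t * x := by
        rw [hur, map_mul, Complex.conj_ofReal]
        have : a * (((t:ℝ):ℂ) * (starRingEnd ℂ) W) = ((t:ℝ):ℂ) * (a * (starRingEnd ℂ) W) := by
          ring
        rw [this, Complex.re_ofReal_mul, hx]
      have hmul : (a * (u r)).re = t * y := by
        rw [hur]
        have : a * (((t:ℝ):ℂ) * W) = ((t:ℝ):ℂ) * (a * W) := by ring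
        rw [this, Complex.re_ofReal_mul, hy]
      have hDr : D r = P / B := by rw [hD]
      -- final algebra
      show lhs r ≤ rhs r
      simp only [hlhs, hrhs]
      rw [hDr, hnsqu, hconj, hmul, ← hBdef, ← ht]
      rw [hE1, hE2] at keysq
      have hgoal : ((1+r)*(1-normSq z)/B) * (t^2 * normSq W) * B ≤
          ((P/B - 1)*t*normSq a + 2*(t*x) + 2*(P/B)*(t*y)) * B := by
        have e1 : ((1+r)*(1-normSq z)/B) * (t^2 * normSq W) * B
            = (1+r)*(1-normSq z)*t^2*normSq W := by field_simp
        have e2 : ((P/B - 1)*t*normSq a + 2*(t*x) + 2*(P/B)*(t*y)) * B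
            = (P-B)*t*normSq a + 2*t*x*B + 2*P*t*y := by field_simp
        rw [e1, e2]
        have h4 : (1+r)*(1-normSq z)*t = B - P := by rw [hBP, ht]; ring
        have h5 := mul_le_mul_of_nonneg_left keysq htpos.le
        calc (1+r)*(1-normSq z)*t^2*normSq W = (B-P)*t*normSq W := by
              linear_combination (t*normSq W)*h4
          _ ≤ (P-B)*t*normSq a + 2*t*x*B + 2*P*t*y := by ring_nf at h5 ⊢; linarith [h5]
      exact le_of_mul_le_mul_right hgoal hB
    -- limits
    have hBlim : Tendsto (fun r : ℝ => normSq (1 - (starRingEnd ℂ) ((r:ℂ)*ζ) * z))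
        (nhdsWithin 1 (Set.Iio 1)) (nhds (normSq (ζ - z))) := by
      have hcont0 : Continuous (fun r : ℝ => (1:ℂ) - (starRingEnd ℂ) ((r:ℂ)*ζ) * z) :=
        continuous_const.sub (((continuous_star.comp
          (Complex.continuous_ofReal.mul continuous_const))).mul continuous_const)
      have hcont : Continuous (fun r : ℝ => normSq (1 - (starRingEnd ℂ) ((r:ℂ)*ζ) * z)) :=
        Complex.continuous_normSq.comp hcont0
      have h6 := hcont.tendsto 1
      have h7 : normSq (1 - (starRingEnd ℂ) ((1:ℝ)*ζ : ℂ) * z) = normSq (ζ - z) := by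
        have : (1:ℂ) - (starRingEnd ℂ) (((1:ℝ):ℂ)*ζ) * z = (starRingEnd ℂ) ζ * (ζ - z) := by
          rw [Complex.ofReal_one, one_mul, mul_sub]
          rw [← Complex.normSq_eq_conj_mul_self] -- conj ζ * ζ = normSq ζ
          rw [hζnsq]; push_cast; ring
        rw [this, normSq_mul, normSq_conj, hζnsq, one_mul]
      rw [← h7]
      exact (h6.mono_left nhdsWithin_le_nhds).congr (fun r => rfl)
    have hPlim : Tendsto (fun r : ℝ => normSq (z - (r:ℂ)*ζ))
        (nhdsWithin 1 (Set.Iio 1)) (nhds (normSq (ζ - z))) := by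
      have hcont0 : Continuous (fun r : ℝ => z - (r:ℂ)*ζ) := by fun_prop
      have hcont : Continuous (fun r : ℝ => normSq (z - (r:ℂ)*ζ)) :=
        Complex.continuous_normSq.comp hcont0
      have h6 := (hcont.tendsto 1).mono_left (nhdsWithin_le_nhds (s := Set.Iio 1))
      have h7 : normSq (z - ((1:ℝ):ℂ)*ζ) = normSq (ζ - z) := by
        rw [Complex.ofReal_one, one_mul, ← normSq_neg]; ring_nf
      rwa [h7] at h6
    have hDlim : Tendsto D (nhdsWithin 1 (Set.Iio 1)) (nhds 1) := by
      have h := hPlim.div hBlim hnsqζz.ne'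
      rw [div_self hnsqζz.ne'] at h
      exact h
    have hulim : Tendsto u (nhdsWithin 1 (Set.Iio 1)) (nhds ((2*c : ℝ) : ℂ)) := hlim
    have hlhslim : Tendsto lhs (nhdsWithin 1 (Set.Iio 1))
        (nhds (2*(1-normSq z)/normSq (ζ - z) * ((2*c)*(2*c)))) := by
      have h1 : Tendsto (fun r : ℝ => (1+r)*(1-normSq z)) (nhdsWithin 1 (Set.Iio 1))
          (nhds (2*(1-normSq z))) := by
        have hcont : Continuous (fun r : ℝ => (1+r)*(1-normSq z)) := by fun_prop
        have h2 := (hcont.tendsto 1).mono_left (nhdsWithin_le_nhds (s := Set.Iio 1))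
        have h3 : (1+(1:ℝ))*(1-normSq z) = 2*(1-normSq z) := by ring
        rwa [h3] at h2
      have h3 : Tendsto (fun r => normSq (u r)) (nhdsWithin 1 (Set.Iio 1))
          (nhds ((2*c)*(2*c))) := by
        have := (Complex.continuous_normSq.tendsto ((2*c : ℝ) : ℂ)).comp hulim
        rwa [Complex.normSq_ofReal] at this
      exact ((h1.div hBlim hnsqζz.ne').mul h3)
    have hrhslim : Tendsto rhs (nhdsWithin 1 (Set.Iio 1))
        (nhds ((1-1)*(1-1)*normSq a + 2*((2*c)*a.re) + 2*1*((2*c)*a.re))) := by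
      have h1 : Tendsto (fun r : ℝ => (D r - 1)*(1-r)*normSq a) (nhdsWithin 1 (Set.Iio 1))
          (nhds ((1-1)*(1-1)*normSq a)) := by
        apply Tendsto.mul _ tendsto_const_nhds
        apply Tendsto.mul (hDlim.sub tendsto_const_nhds)
        have : Continuous (fun r : ℝ => 1 - r) := by fun_prop
        exact (this.tendsto 1).mono_left (nhdsWithin_le_nhds (s := Set.Iio 1))
      have h2 : Tendsto (fun r => 2*(a*(starRingEnd ℂ) (u r)).re) (nhdsWithin 1 (Set.Iio 1))
          (nhds (2*((2*c)*a.re))) := by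
        apply Tendsto.const_mul
        have hcc : Continuous (fun v : ℂ => (a * (starRingEnd ℂ) v).re) := by fun_prop
        have := (hcc.tendsto ((2*c : ℝ) : ℂ)).comp hulim
        have h7 : (a * (starRingEnd ℂ) ((2*c : ℝ) : ℂ)).re = (2*c)*a.re := by
          rw [Complex.conj_ofReal]
          rw [mul_comm, Complex.re_ofReal_mul]
        rwa [h7] at this
      have h3 : Tendsto (fun r => 2*(D r)*((a*(u r)).re)) (nhdsWithin 1 (Set.Iio 1))
          (nhds (2*1*((2*c)*a.re))) := by
        apply Tendsto.mul (Tendsto.const_mul 2 hDlim)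
        have hcc : Continuous (fun v : ℂ => (a * v).re) := by fun_prop
        have := (hcc.tendsto ((2*c : ℝ) : ℂ)).comp hulim
        have h7 : (a * ((2*c : ℝ) : ℂ)).re = (2*c)*a.re := by
          rw [mul_comm, Complex.re_ofReal_mul]
        rwa [h7] at this
      exact (h1.add h2).add h3
    have hfinal := le_of_tendsto_of_tendsto hlhslim hrhslim hineq
    have h8 : 2*(1-normSq z)/normSq (ζ - z) * ((2*c)*(2*c)) ≤ 8 * c * a.re := by
      have e : (1-1)*(1-1)*normSq a + 2*((2*c)*a.re) + 2*1*((2*c)*a.re) = 8*c*a.re := by ring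
      linarith [hfinal, e]
    have h9 : 2*(1-normSq z)/normSq (ζ - z) * ((2*c)*(2*c))
        = 8*c*((1 - normSq z)/normSq (ζ - z)*c) := by ring
    rw [h9] at h8
    have h10 : (0:ℝ) < 8*c := by linarith
    exact le_of_mul_le_mul_left h8 h10
  -- conclude
  have hKre : ((ζ + z)/(ζ - z)).re = (1 - normSq z)/normSq (ζ - z) := by
    have hζ1 : ζ.re*ζ.re + ζ.im*ζ.im = 1 := by
      rw [← Complex.normSq_apply]; exact hζnsq
    have hnum : (ζ+z).re*(ζ-z).re + (ζ+z).im*(ζ-z).im = 1 - normSq z := by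
      simp only [Complex.add_re, Complex.add_im, Complex.sub_re, Complex.sub_im,
        Complex.normSq_apply]
      linear_combination hζ1
    rw [Complex.div_re, ← add_div, hnum]
  rw [Complex.sub_re]
  have : ((c:ℂ) * ((ζ + z)/(ζ - z))).re = c * ((ζ + z)/(ζ - z)).re := Complex.re_ofReal_mul _ _
  rw [this, hKre]
  ring_nf at hmain ⊢
  linarith [hmain]

lemma harnack_bounds {g : ℂ → ℂ} (hd : DifferentiableOn ℂ g (ball (0:ℂ) 1))
    (hre : ∀ z ∈ ball (0:ℂ) 1, 0 ≤ (g z).re) {C : ℝ} (hg0 : g 0 = (C:ℂ))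
    {z : ℂ} (hz : z ∈ ball (0:ℂ) 1) :
    C * ((1 - ‖z‖)/(1 + ‖z‖)) ≤ ‖g z‖ ∧
      ‖g z‖ ≤ C * ((1 + ‖z‖)/(1 - ‖z‖)) := by
  have h0ball : (0:ℂ) ∈ ball (0:ℂ) 1 := by simp
  have hz' : ‖z‖ < 1 := by rwa [mem_ball_zero_iff] at hz
  have habsz : 0 ≤ ‖z‖ := norm_nonneg z
  have hC : 0 ≤ C := by
    have := hre 0 h0ball
    rwa [hg0, Complex.ofReal_re] at this
  rcases eq_or_lt_of_le hC with hC0 | hCpos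
  · -- C = 0 : g ≡ 0
    have h1 : (g 0).re = 0 := by rw [hg0, Complex.ofReal_re, ← hC0]
    have h2 := const_of_re_eq_zero hd hre h0ball h1
    have h3 : g z = 0 := by rw [h2 z hz, hg0, ← hC0]; simp
    rw [h3, ← hC0]
    constructor
    · simp
    · simp
  -- C > 0
  have hgpos : ∀ u ∈ ball (0:ℂ) 1, 0 < (g u).re := by
    by_contra hcon
    push_neg at hcon
    obtain ⟨z₁, hz₁, hle⟩ := hcon
    have h1 : (g z₁).re = 0 := le_antisymm hle (hre z₁ hz₁)
    have h2 := const_of_re_eq_zero hd hre hz₁ h1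
    have h3 : g 0 = g z₁ := h2 0 h0ball
    rw [hg0] at h3
    have : C = (g z₁).re := by rw [← h3, Complex.ofReal_re]
    rw [h1] at this
    linarith
  have hden : ∀ u ∈ ball (0:ℂ) 1, g u + (C:ℂ) ≠ 0 := by
    intro u hu hcon
    have h1 : 0 < (g u + (C:ℂ)).re := by
      rw [Complex.add_re, Complex.ofReal_re]
      have := hgpos u hu
      linarith
    rw [hcon] at h1
    simp at h1
  set G : ℂ → ℂ := fun u => (g u - (C:ℂ)) / (g u + (C:ℂ)) with hG
  have hGd : DifferentiableOn ℂ G (ball (0:ℂ) 1) :=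
    (hd.sub (differentiableOn_const _)).div (hd.add (differentiableOn_const _)) hden
  have hG0 : G 0 = 0 := by rw [hG]; simp [hg0]
  have hGmaps : MapsTo G (ball (0:ℂ) 1) (ball (0:ℂ) 1) := by
    intro u hu
    rw [mem_ball_zero_iff]
    show ‖(g u - (C:ℂ)) / (g u + (C:ℂ))‖ < 1
    rw [norm_div, div_lt_one (norm_pos_iff.mpr (hden u hu))]
    show ‖_‖ < ‖_‖
    apply abs_lt_abs_of_nsq
    have h1 := nsq_sub' (g u) ((C:ℂ))
    have h2 := nsq_addconj (g u) ((C:ℂ))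
    rw [Complex.conj_ofReal] at h1 h2
    have h3 : ((g u) * (C:ℂ)).re = C * (g u).re := by
      rw [mul_comm, Complex.re_ofReal_mul]
    have h4 := hgpos u hu
    rw [h3] at h1 h2
    nlinarith [h1, h2, h4, hCpos, mul_pos hCpos h4]
  have habs : ‖G z‖ ≤ ‖z‖ :=
    Complex.norm_le_norm_of_mapsTo_ball hGd (hGmaps.mono_right ball_subset_closedBall) hG0 hz'
  have hGlt : ‖G z‖ < 1 := lt_of_le_of_lt habs hz'
  have hone : (1:ℂ) - G z ≠ 0 := by
    intro hcon
    have : G z = 1 := by linear_combination -hcon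
    rw [this] at hGlt; simp at hGlt
  have hrec : g z * (1 - G z) = (C:ℂ) * (1 + G z) := by
    rw [hG]
    field_simp [hden z hz]
    ring
  have habseq : ‖g z‖ * ‖1 - G z‖ = C * ‖1 + G z‖ := by
    have := congrArg (‖·‖) hrec
    rwa [norm_mul, norm_mul, Complex.norm_real, Real.norm_eq_abs, abs_of_pos hCpos] at this
  have hub1 : ‖1 - G z‖ ≤ 1 + ‖z‖ := by
    have h := norm_sub_le (1:ℂ) (G z)
    simp only [norm_one, map_one] at h
    linarith
  have hlb1 : 1 - ‖z‖ ≤ ‖1 - G z‖ := by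
    have h := norm_sub_norm_le (1:ℂ) (G z)
    simp only [norm_one, map_one] at h
    linarith
  have hub2 : ‖1 + G z‖ ≤ 1 + ‖z‖ := by
    have h := norm_add_le (1:ℂ) (G z)
    simp only [norm_one, map_one] at h
    linarith
  have hlb2 : 1 - ‖z‖ ≤ ‖1 + G z‖ := by
    have h := norm_sub_norm_le (1:ℂ) (-(G z))
    rw [sub_neg_eq_add, norm_neg] at h
    simp only [norm_one, map_one] at h
    linarith
  have h1z : 0 < 1 - ‖z‖ := by linarith
  have h2z : 0 < 1 + ‖z‖ := by linarith
  constructor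
  · rw [← mul_div_assoc, div_le_iff₀ h2z]
    have e1 : C * (1 - ‖z‖) ≤ C * ‖1 + G z‖ :=
      mul_le_mul_of_nonneg_left hlb2 hC
    rw [← habseq] at e1
    calc C * (1 - ‖z‖)
        ≤ ‖g z‖ * ‖1 - G z‖ := e1
    _ ≤ ‖g z‖ * (1 + ‖z‖) :=
        mul_le_mul_of_nonneg_left hub1 (norm_nonneg _)
  · rw [← mul_div_assoc, le_div_iff₀ h1z]
    have e2 : ‖g z‖ * (1 - ‖z‖) ≤
        ‖g z‖ * ‖1 - G z‖ :=
      mul_le_mul_of_nonneg_left hlb1 (norm_nonneg _)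
    rw [habseq] at e2
    calc ‖g z‖ * (1 - ‖z‖) ≤ C * ‖1 + G z‖ := e2
    _ ≤ C * (1 + ‖z‖) := mul_le_mul_of_nonneg_left hub2 hC

lemma radial_limit {p f : ℂ → ℂ} (hf : ∀ z, f z = z * p z) {ζ : ℂ}
    (hζ : ‖ζ‖ = 1) {m : ℝ} (hm : m < 0)
    (hder : AngularLimit (fun z => f z / (z - ζ)) ζ ((m : ℝ) : ℂ)) :
    Tendsto (fun r : ℝ => ((1 - r : ℝ) : ℂ) * (1 / p ((r:ℂ) * ζ)))
      (nhdsWithin 1 (Set.Iio 1)) (nhds (((1/|m| : ℝ) : ℂ))) := by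
  have hζ0 : ζ ≠ 0 := by
    intro h; rw [h] at hζ; simp at hζ
  have hIoo : Set.Ioo (0:ℝ) 1 ∈ nhdsWithin (1:ℝ) (Set.Iio 1) :=
    Ioo_mem_nhdsLT_of_mem ⟨zero_lt_one, le_rfl⟩
  have h2 := hder 2 one_lt_two
  have hpath : Tendsto (fun r : ℝ => (r:ℂ) * ζ) (nhdsWithin 1 (Set.Iio 1))
      (nhdsWithin ζ (StolzAngle ζ 2)) := by
    rw [tendsto_nhdsWithin_iff]
    constructor
    · have hcont : Continuous (fun r : ℝ => (r:ℂ) * ζ) :=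
        Complex.continuous_ofReal.mul continuous_const
      have := (hcont.tendsto 1).mono_left (nhdsWithin_le_nhds (s := Set.Iio 1))
      simpa using this
    · filter_upwards [hIoo] with r hr
      constructor
      · show ‖_‖ < 1
        rw [norm_mul, Complex.norm_real, Real.norm_eq_abs, hζ, mul_one, abs_of_pos hr.1]
        exact hr.2
      · show ‖ζ - (r:ℂ)*ζ‖ < 2 * (1 - ‖(r:ℂ)*ζ‖)
        have e1 : ζ - (r:ℂ)*ζ = ((1-r : ℝ):ℂ) * ζ := by push_cast; ring
        rw [e1, norm_mul, Complex.norm_real, Real.norm_eq_abs, hζ, mul_one,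
          norm_mul, Complex.norm_real, Real.norm_eq_abs, hζ, mul_one,
          abs_of_pos hr.1, abs_of_pos (by linarith [hr.2] : (0:ℝ) < 1 - r)]
        linarith [hr.2]
  have hcomp : Tendsto (fun r : ℝ => f ((r:ℂ)*ζ) / ((r:ℂ)*ζ - ζ)) (nhdsWithin 1 (Set.Iio 1))
      (nhds ((m:ℝ):ℂ)) := h2.comp hpath
  have hmne : ((m:ℝ):ℂ) ≠ 0 := by
    intro h
    have : m = 0 := by exact_mod_cast h
    linarith
  have hinv := hcomp.inv₀ hmne
  have hnegr : Tendsto (fun r : ℝ => -((r:ℂ))) (nhdsWithin 1 (Set.Iio 1)) (nhds (-1)) := by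
    have hcont : Continuous (fun r : ℝ => -((r:ℂ))) := Complex.continuous_ofReal.neg
    have := (hcont.tendsto 1).mono_left (nhdsWithin_le_nhds (s := Set.Iio 1))
    simpa using this
  have hmul := hinv.mul hnegr
  have hval : (((m:ℝ):ℂ))⁻¹ * (-1) = ((1/|m| : ℝ) : ℂ) := by
    rw [abs_of_neg hm]
    push_cast
    field_simp
  rw [hval] at hmul
  apply hmul.congr'
  filter_upwards [hIoo] with r hr
  have hrne : ((r:ℝ):ℂ) ≠ 0 := by
    simp only [ne_eq, Complex.ofReal_eq_zero]
    exact ne_of_gt hr.1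
  have hsub : (r:ℂ)*ζ - ζ ≠ 0 := by
    have e1 : (r:ℂ)*ζ - ζ = ((r - 1 : ℝ):ℂ) * ζ := by push_cast; ring
    rw [e1]
    apply mul_ne_zero _ hζ0
    simp only [ne_eq, Complex.ofReal_eq_zero]
    intro h
    have : r = 1 := by linarith [sub_eq_zero.mp h]
    linarith [hr.2, this]
  show (f ((r:ℂ)*ζ) / ((r:ℂ)*ζ - ζ))⁻¹ * (-((r:ℝ):ℂ)) = ((1-r:ℝ):ℂ) * (1 / p ((r:ℂ)*ζ))
  rw [hf]
  by_cases hp0 : p ((r:ℂ)*ζ) = 0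
  · rw [hp0]
    simp
  · rw [inv_div]
    field_simp
    push_cast
    ring

end Aux


section Main

/-- Theorem `t.dd`: a two-sided distortion estimate in the
dilation case. -/
theorem stmt12 (N : ℕ) (hN : 1 ≤ N) (p f : ℂ → ℂ)
    (hp : DifferentiableOn ℂ p (ball (0:ℂ) 1))
    (hre : ∀ z ∈ ball (0:ℂ) 1, 0 ≤ (p z).re)
    (hf : ∀ z, f z = z * p z)
    (ζ : Fin N → ℂ) (hinj : Function.Injective ζ)
    (hζ : ∀ n, ‖ζ n‖ = 1)
    (m : Fin N → ℝ) (hm : ∀ n, m n < 0)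
    (hder : ∀ n, AngularLimit (fun z => f z / (z - ζ n)) (ζ n) ((m n : ℝ) : ℂ))
    (C : ℝ) (hC : C = (1 / p 0).re - (1 / 2) * ∑ n, 1 / |m n|) :
    ∀ z ∈ ball (0:ℂ) 1, z ≠ 0 →
      C * ((1 - ‖z‖) / (1 + ‖z‖)) ≤
        ‖z * (1 / f z
            - ∑ n, (1 / ((|m n| : ℝ) : ℂ)) * (1 / (2 * z) - 1 / (z - ζ n)))
          - Complex.I * (((1 / p 0).im : ℝ) : ℂ)‖ ∧
      ‖z * (1 / f z
            - ∑ n, (1 / ((|m n| : ℝ) : ℂ)) * (1 / (2 * z) - 1 / (z - ζ n)))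
          - Complex.I * (((1 / p 0).im : ℝ) : ℂ)‖ ≤
        C * ((1 + ‖z‖) / (1 - ‖z‖)) := by
  have habsm : ∀ n, 0 < |m n| := fun n => abs_pos.mpr (ne_of_lt (hm n))
  have hζ0 : ∀ n, ζ n ≠ 0 := by
    intro n h; have := hζ n; rw [h] at this; simp at this
  have hζsub : ∀ n, ∀ z ∈ ball (0:ℂ) 1, ζ n - z ≠ 0 := by
    intro n z hz h
    have h1 : ζ n = z := by linear_combination h
    rw [mem_ball_zero_iff, ← h1] at hz
    show False
    have := hζ n
    rw [this] at hz
    exact lt_irrefl 1 hz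
  have hrad : ∀ n, Tendsto (fun r : ℝ => ((1 - r : ℝ) : ℂ) * (1 / p ((r:ℂ) * ζ n)))
      (nhdsWithin 1 (Set.Iio 1)) (nhds (((1/|m n| : ℝ) : ℂ))) :=
    fun n => radial_limit hf (hζ n) (hm n) (hder n)
  have h0ball : (0:ℂ) ∈ ball (0:ℂ) 1 := by simp
  have hIoo : Set.Ioo (0:ℝ) 1 ∈ nhdsWithin (1:ℝ) (Set.Iio 1) :=
    Ioo_mem_nhdsLT_of_mem ⟨zero_lt_one, le_rfl⟩
  have hrball : ∀ (n : Fin N), ∀ r : ℝ, r ∈ Set.Ioo (0:ℝ) 1 → (r:ℂ) * ζ n ∈ ball (0:ℂ) 1 := by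
    intro n r hr
    rw [mem_ball_zero_iff]
    show ‖_‖ < 1
    rw [norm_mul, Complex.norm_real, Real.norm_eq_abs, hζ n, mul_one, abs_of_pos hr.1]
    exact hr.2
  -- strict positivity of Re p
  have hppos : ∀ z ∈ ball (0:ℂ) 1, 0 < (p z).re := by
    by_contra hcon
    push_neg at hcon
    obtain ⟨z₀, hz₀, hle⟩ := hcon
    have h0 : (p z₀).re = 0 := le_antisymm hle (hre z₀ hz₀)
    have hconst := const_of_re_eq_zero hp hre hz₀ h0
    set n₀ : Fin N := ⟨0, hN⟩
    have h1 : Tendsto (fun r : ℝ => ((1 - r : ℝ) : ℂ) * (1 / p ((r:ℂ) * ζ n₀)))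
        (nhdsWithin 1 (Set.Iio 1)) (nhds 0) := by
      have h2 : Tendsto (fun r : ℝ => ((1 - r : ℝ) : ℂ) * (1 / p z₀))
          (nhdsWithin 1 (Set.Iio 1)) (nhds 0) := by
        have h3 : Continuous (fun r : ℝ => ((1 - r : ℝ) : ℂ)) :=
          Complex.continuous_ofReal.comp (continuous_const.sub continuous_id)
        have h4 := (h3.tendsto 1).mono_left (nhdsWithin_le_nhds (s := Set.Iio 1))
        simp only [sub_self, Complex.ofReal_zero] at h4
        simpa using h4.mul (tendsto_const_nhds (x := 1 / p z₀))
      apply h2.congr'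
      filter_upwards [hIoo] with r hr
      rw [hconst _ (hrball n₀ r hr)]
    have h5 := tendsto_nhds_unique (hrad n₀) h1
    have h6 : (1/|m n₀| : ℝ) = 0 := by exact_mod_cast h5
    have := habsm n₀
    rw [div_eq_zero_iff] at h6
    rcases h6 with h6 | h6
    · linarith
    · linarith
  have hpne : ∀ z ∈ ball (0:ℂ) 1, p z ≠ 0 := by
    intro z hz h
    have := hppos z hz
    rw [h] at this; simp at this
  -- setup
  set c : Fin N → ℝ := fun n => 1/(2*|m n|) with hcdef
  set K : Fin N → ℂ → ℂ := fun n z => (ζ n + z)/(ζ n - z) with hKdef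
  set Qs : Finset (Fin N) → ℂ → ℂ :=
    fun s z => 1/p z - ∑ n ∈ s, ((c n : ℝ):ℂ) * K n z with hQdef
  have hKd : ∀ n, DifferentiableOn ℂ (K n) (ball (0:ℂ) 1) := by
    intro n
    apply DifferentiableOn.div
    · exact (differentiable_id.const_add (ζ n)).differentiableOn
    · exact ((differentiable_const (ζ n)).sub differentiable_id).differentiableOn
    · exact hζsub n
  have hQd : ∀ s, DifferentiableOn ℂ (Qs s) (ball (0:ℂ) 1) := by
    intro s
    apply DifferentiableOn.sub
    · exact (differentiableOn_const 1).div hp hpne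
    · exact DifferentiableOn.fun_sum (fun n _ => (hKd n).const_smul ((c n : ℝ):ℂ) |>.congr
        (fun z _ => by simp [smul_eq_mul]))
  -- the induction
  have key : ∀ s : Finset (Fin N), ∀ z ∈ ball (0:ℂ) 1, 0 ≤ (Qs s z).re := by
    intro s
    induction s using Finset.induction_on with
    | empty =>
      intro z hz
      simp only [hQdef, Finset.sum_empty, sub_zero, one_div]
      rw [Complex.inv_re]
      exact div_nonneg (hre z hz) (normSq_nonneg _)
    | insert j s hj ih =>
      intro z hz
      have hlim : Tendsto (fun r : ℝ => ((1 - r : ℝ) : ℂ) * Qs s ((r:ℂ) * ζ j))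
          (nhdsWithin 1 (Set.Iio 1)) (nhds ((2 * c j : ℝ) : ℂ)) := by
        have hsumlim : Tendsto
            (fun r : ℝ => ∑ n ∈ s, ((1 - r : ℝ) : ℂ) * (((c n : ℝ):ℂ) * K n ((r:ℂ) * ζ j)))
            (nhdsWithin 1 (Set.Iio 1)) (nhds 0) := by
          have h7 : (0:ℂ) = ∑ n ∈ s, 0 := by simp
          rw [h7]
          apply tendsto_finset_sum
          intro n hn
          have hnj : ζ n - ζ j ≠ 0 := by
            intro hcon
            have : ζ n = ζ j := by linear_combination hcon
            have hne : n ≠ j := by intro h; rw [h] at hn; exact hj hn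
            exact hne (hinj this)
          have hKlim : Tendsto (fun r : ℝ => ((c n : ℝ):ℂ) * K n ((r:ℂ) * ζ j))
              (nhdsWithin 1 (Set.Iio 1)) (nhds (((c n : ℝ):ℂ) * K n (ζ j))) := by
            apply Tendsto.const_mul
            simp only [hKdef]
            have hc1 : Continuous (fun r : ℝ => ζ n + (r:ℂ) * ζ j) := by fun_prop
            have hc2 : Continuous (fun r : ℝ => ζ n - (r:ℂ) * ζ j) := by fun_prop
            have h8 := Tendsto.div ((hc1.tendsto 1).mono_left (nhdsWithin_le_nhds (s := Set.Iio 1)))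
              ((hc2.tendsto 1).mono_left (nhdsWithin_le_nhds (s := Set.Iio 1))) (by
                simpa using hnj)
            simp only [Complex.ofReal_one, one_mul] at h8
            exact h8
          have hslim : Tendsto (fun r : ℝ => ((1 - r : ℝ) : ℂ))
              (nhdsWithin 1 (Set.Iio 1)) (nhds 0) := by
            have h3 : Continuous (fun r : ℝ => ((1 - r : ℝ) : ℂ)) :=
              Complex.continuous_ofReal.comp (continuous_const.sub continuous_id)
            have h4 := (h3.tendsto 1).mono_left (nhdsWithin_le_nhds (s := Set.Iio 1))
            simpa using h4
          simpa using hslim.mul hKlim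
        have hbase := hrad j
        have hcomb := hbase.sub hsumlim
        rw [sub_zero] at hcomb
        have hval : ((1/|m j| : ℝ) : ℂ) = ((2 * c j : ℝ) : ℂ) := by
          norm_cast
          rw [hcdef]
          have h9 : |m j| ≠ 0 := (habsm j).ne'
          field_simp
        rw [hval] at hcomb
        apply hcomb.congr'
        filter_upwards [hIoo] with r hr
        simp only [hQdef]
        rw [mul_sub, Finset.mul_sum]
      have hcj : 0 ≤ c j := by
        rw [hcdef]
        positivity
      have hjul := herglotz_julia (hQd s) ih (hζ j) hcj hlim z hz
      have he : Qs (insert j s) z = Qs s z - ((c j : ℝ):ℂ) * K j z := by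
        simp only [hQdef, Finset.sum_insert hj]
        ring
      rw [he]
      simpa only [hKdef] using hjul
  -- final function g
  set q : ℂ → ℂ := Qs Finset.univ with hqdef
  have hK0 : ∀ n, K n 0 = 1 := by
    intro n
    simp only [hKdef]
    rw [add_zero, sub_zero, div_self (hζ0 n)]
  have hq0 : q 0 = 1/p 0 - ((∑ n, c n : ℝ):ℂ) := by
    rw [hqdef]
    simp only [hQdef]
    congr 1
    rw [Complex.ofReal_sum]
    apply Finset.sum_congr rfl
    intro n _
    rw [hK0 n, mul_one]
  set g : ℂ → ℂ := fun z => q z - Complex.I * (((1 / p 0).im : ℝ) : ℂ) with hgdef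
  have hgd : DifferentiableOn ℂ g (ball (0:ℂ) 1) :=
    (hQd Finset.univ).sub (differentiableOn_const _)
  have hgre : ∀ z ∈ ball (0:ℂ) 1, 0 ≤ (g z).re := by
    intro z hz
    have h1 := key Finset.univ z hz
    simp only [hgdef, Complex.sub_re, Complex.mul_re, Complex.I_re, Complex.I_im,
      Complex.ofReal_re, Complex.ofReal_im]
    simpa using h1
  have hsumc : (∑ n, c n : ℝ) = (1 / 2) * ∑ n, 1 / |m n| := by
    rw [Finset.mul_sum]
    apply Finset.sum_congr rfl
    intro n _
    rw [hcdef]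
    field_simp
  have hg0 : g 0 = ((C : ℝ) : ℂ) := by
    rw [hgdef]
    simp only []
    rw [hq0]
    apply Complex.ext
    · simp only [Complex.sub_re, Complex.ofReal_re, Complex.mul_re, Complex.I_re, Complex.I_im,
        Complex.ofReal_im]
      rw [hC, hsumc]
      simp
    · simp only [Complex.sub_im, Complex.ofReal_im, Complex.mul_im, Complex.I_re, Complex.I_im,
        Complex.ofReal_re]
      simp
  -- conclude
  intro z hz hz0
  have hbounds := harnack_bounds hgd hgre hg0 hz
  have hexp : z * (1 / f z
        - ∑ n, (1 / ((|m n| : ℝ) : ℂ)) * (1 / (2 * z) - 1 / (z - ζ n)))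
      - Complex.I * (((1 / p 0).im : ℝ) : ℂ) = g z := by
    rw [hgdef]
    simp only [hqdef, hQdef]
    congr 1
    rw [mul_sub, Finset.mul_sum]
    congr 1
    · rw [hf]
      field_simp [hpne z hz]
    · apply Finset.sum_congr rfl
      intro n _
      simp only [hKdef, hcdef]
      have h1 : z - ζ n ≠ 0 := by
        intro hcon
        apply hζsub n z hz
        linear_combination -hcon
      have h2 : ζ n - z ≠ 0 := hζsub n z hz
      have h3 : ((|m n| : ℝ):ℂ) ≠ 0 := by
        simp only [ne_eq, Complex.ofReal_eq_zero]
        exact ne_of_gt (habsm n)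
      push_cast
      field_simp
      ring
  rw [hexp]
  exact hbounds

end Main
end
end

section
/- Let F be a holomorphic self-mapping of 𝔻 with Denjoy–Wolff point a = 1, i.e. the angular limit of F at 1 equals 1 and the angular derivative F'(1) = ∠lim_{z→1} (F(z) − 1)/(z − 1) exists and satisfies F'(1) ≤ 1, and assume F(0) ≠ 0. Let ζ_1, …, ζ_N be pairwise distinct boundary regular fixed points of F different from 1, i.e. the angular limit of F at ζ_n equals ζ_n and F'(ζ_n) = ∠lim_{z→ζ_n} (F(z) − ζ_n)/(z − ζ_n) exists finitely (and then F'(ζ_n) > 1 for each n). Then Σ_{n=1}^{N} |1 − ζ_n|²/(F'(ζ_n) − 1) ≤ 2·Re(1/F(0) − 1). -/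
open Complex Filter Metric Finset

noncomputable section

open Topology

lemma re_div' (u w : ℂ) : (u / w).re = (u * (starRingEnd ℂ) w).re / normSq w := by
  simp [div_re, mul_re, conj_re, conj_im]
  ring

lemma key_id (u w : ℂ) : normSq (1 - (starRingEnd ℂ) w * u) - normSq (u - w)
    = (1 - normSq w) * (1 - normSq u) := by
  simp only [normSq_apply, mul_re, mul_im, sub_re, sub_im, one_re, one_im, conj_re, conj_im]
  ring

lemma mem_ball_iff_normSq {z : ℂ} : z ∈ ball (0:ℂ) 1 ↔ normSq z < 1 := by
  rw [mem_ball_zero_iff, ← Complex.sq_norm]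
  constructor
  · intro h; nlinarith [norm_nonneg z]
  · intro h; nlinarith [norm_nonneg z]

lemma mob_den_ne {w z : ℂ} (hw : w ∈ ball (0:ℂ) 1) (hz : z ∈ ball (0:ℂ) 1) :
    1 - (starRingEnd ℂ) w * z ≠ 0 := by
  rw [mem_ball_zero_iff] at hw hz
  intro h
  have h1 : (starRingEnd ℂ) w * z = 1 := by linear_combination -h
  have : ‖(starRingEnd ℂ) w * z‖ = 1 := by simp [h1]
  rw [norm_mul, Complex.norm_conj] at this
  nlinarith [norm_nonneg w, norm_nonneg z]

lemma mob_mem {w z : ℂ} (hw : w ∈ ball (0:ℂ) 1) (hz : z ∈ ball (0:ℂ) 1) :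
    (z - w) / (1 - (starRingEnd ℂ) w * z) ∈ ball (0:ℂ) 1 := by
  rw [mem_ball_iff_normSq, map_div₀, div_lt_one]
  · have hk := key_id z w
    rw [mem_ball_iff_normSq] at hw hz
    nlinarith
  · exact normSq_pos.2 (mob_den_ne hw hz)

lemma neg_mem_ball' {w : ℂ} (hw : w ∈ ball (0:ℂ) 1) : -w ∈ ball (0:ℂ) 1 := by
  rw [mem_ball_zero_iff] at hw ⊢; simpa using hw

lemma mob_den_ne' {w z : ℂ} (hw : w ∈ ball (0:ℂ) 1) (hz : z ∈ ball (0:ℂ) 1) :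
    1 + (starRingEnd ℂ) w * z ≠ 0 := by
  have := mob_den_ne (neg_mem_ball' hw) hz
  simpa using this

lemma mob_mem' {w z : ℂ} (hw : w ∈ ball (0:ℂ) 1) (hz : z ∈ ball (0:ℂ) 1) :
    (z + w) / (1 + (starRingEnd ℂ) w * z) ∈ ball (0:ℂ) 1 := by
  have := mob_mem (neg_mem_ball' hw) hz
  simpa using this

lemma schwarz_pick_zero {f : ℂ → ℂ} (hd : DifferentiableOn ℂ f (ball (0:ℂ) 1))
    (hm : Set.MapsTo f (ball (0:ℂ) 1) (ball (0:ℂ) 1)) {w : ℂ} (hw : w ∈ ball (0:ℂ) 1)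
    (hfw : f w = 0) {z : ℂ} (hz : z ∈ ball (0:ℂ) 1) :
    ‖f z‖ * ‖1 - (starRingEnd ℂ) w * z‖ ≤ ‖z - w‖ := by
  set φ : ℂ → ℂ := fun u => (u + w) / (1 + (starRingEnd ℂ) w * u) with hφ
  have hφm : Set.MapsTo φ (ball (0:ℂ) 1) (ball (0:ℂ) 1) := fun u hu => mob_mem' hw hu
  have hφd : DifferentiableOn ℂ φ (ball (0:ℂ) 1) := by
    apply DifferentiableOn.div
    · exact (differentiableOn_id).add_const w
    · exact (differentiableOn_const _).add ((differentiableOn_const _).mul differentiableOn_id)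
    · intro u hu; exact mob_den_ne' hw hu
  set g : ℂ → ℂ := f ∘ φ with hg
  have hgd : DifferentiableOn ℂ g (ball (0:ℂ) 1) := hd.comp hφd hφm
  have hg0 : g 0 = 0 := by simp [hg, hφ, hfw]
  have hgm : Set.MapsTo g (ball (0:ℂ) 1) (ball (g 0) 1) := by
    rw [hg0]; exact hm.comp hφm
  set u₀ : ℂ := (z - w) / (1 - (starRingEnd ℂ) w * z) with hu₀
  have hu₀m : u₀ ∈ ball (0:ℂ) 1 := mob_mem hw hz
  have key := dist_le_div_mul_dist_of_mapsTo_ball hgd (hgm.mono_right ball_subset_closedBall) hu₀m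
  have hφu₀ : φ u₀ = z := by
    have h1 : 1 - (starRingEnd ℂ) w * z ≠ 0 := mob_den_ne hw hz
    have h3 : 1 - (starRingEnd ℂ) w * w ≠ 0 := mob_den_ne hw hw
    have e1 : u₀ + w = z * (1 - (starRingEnd ℂ) w * w) / (1 - (starRingEnd ℂ) w * z) := by
      rw [hu₀, div_add' _ _ _ h1]; congr 1; ring
    have e2 : 1 + (starRingEnd ℂ) w * u₀ =
        (1 - (starRingEnd ℂ) w * w) / (1 - (starRingEnd ℂ) w * z) := by
      rw [hu₀, mul_div_assoc', add_div' _ _ _ h1]; congr 1; ring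
    rw [hφ]; show (u₀ + w) / (1 + (starRingEnd ℂ) w * u₀) = z
    rw [e1, e2]
    rw [div_div_div_cancel_right₀ h1, mul_div_assoc, div_self h3, mul_one]
  have hgu₀ : g u₀ = f z := by rw [hg]; simp [hφu₀]
  rw [hg0, hgu₀, dist_zero_right, dist_zero_right, one_div_one, one_mul] at key
  rw [hu₀] at key
  rw [norm_div] at key
  have hpos : 0 < ‖1 - (starRingEnd ℂ) w * z‖ :=
    norm_pos_iff.2 (mob_den_ne hw hz)
  calc ‖f z‖ * ‖1 - (starRingEnd ℂ) w * z‖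
      ≤ (‖z - w‖ / ‖1 - (starRingEnd ℂ) w * z‖) *
        ‖1 - (starRingEnd ℂ) w * z‖ := by
        apply mul_le_mul_of_nonneg_right key (norm_nonneg _)
    _ = ‖z - w‖ := div_mul_cancel₀ _ hpos.ne'

lemma normSq_sum_sub (a b : ℂ) :
    normSq (a + (starRingEnd ℂ) b) - normSq (a - b) = 4 * a.re * b.re := by
  simp only [normSq_apply, add_re, add_im, sub_re, sub_im, conj_re, conj_im]
  ring

lemma normSq_sub' (a b : ℂ) :
    normSq (a - b) = normSq a + normSq b - 2 * (a * (starRingEnd ℂ) b).re := by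
  simp only [normSq_apply, sub_re, sub_im, mul_re, mul_im, conj_re, conj_im]
  ring

lemma normSq_addconj (a b : ℂ) :
    normSq (a + (starRingEnd ℂ) b) = normSq a + normSq b + 2 * (a * b).re := by
  simp only [normSq_apply, add_re, add_im, mul_re, mul_im, conj_re, conj_im]
  ring

lemma sprhp {Θ : ℂ → ℂ} (hd : DifferentiableOn ℂ Θ (ball (0:ℂ) 1))
    (hre : ∀ u ∈ ball (0:ℂ) 1, 0 < (Θ u).re) {z w : ℂ}
    (hz : z ∈ ball (0:ℂ) 1) (hw : w ∈ ball (0:ℂ) 1) :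
    normSq (Θ z - Θ w) * normSq (1 - (starRingEnd ℂ) w * z)
      ≤ normSq (Θ z + (starRingEnd ℂ) (Θ w)) * normSq (z - w) := by
  set f : ℂ → ℂ := fun u => (Θ u - Θ w) / (Θ u + (starRingEnd ℂ) (Θ w)) with hf
  have hsum_ne : ∀ u ∈ ball (0:ℂ) 1, Θ u + (starRingEnd ℂ) (Θ w) ≠ 0 := by
    intro u hu h
    have h2 := congrArg Complex.re h
    simp only [Complex.add_re, Complex.conj_re, Complex.zero_re] at h2
    nlinarith [hre u hu, hre w hw]
  have hflt : ∀ u ∈ ball (0:ℂ) 1, normSq (Θ u - Θ w) < normSq (Θ u + (starRingEnd ℂ) (Θ w)) := by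
    intro u hu
    have h4 := normSq_sum_sub (Θ u) (Θ w)
    nlinarith [hre u hu, hre w hw]
  have hfm : Set.MapsTo f (ball (0:ℂ) 1) (ball (0:ℂ) 1) := by
    intro u hu
    show (Θ u - Θ w) / (Θ u + (starRingEnd ℂ) (Θ w)) ∈ ball (0:ℂ) 1
    rw [mem_ball_iff_normSq, map_div₀, div_lt_one]
    · exact hflt u hu
    · exact normSq_pos.2 (hsum_ne u hu)
  have hfd : DifferentiableOn ℂ f (ball (0:ℂ) 1) :=
    (hd.sub_const _).div (hd.add_const _) hsum_ne
  have hfw : f w = 0 := by simp [hf]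
  have key := schwarz_pick_zero hfd hfm hw hfw hz
  have hfz : ‖f z‖ =
      ‖Θ z - Θ w‖ / ‖Θ z + (starRingEnd ℂ) (Θ w)‖ := by
    rw [hf]; simp [map_div₀]
  rw [hfz] at key
  have hposd : 0 < ‖Θ z + (starRingEnd ℂ) (Θ w)‖ :=
    norm_pos_iff.2 (hsum_ne z hz)
  have key2 : ‖Θ z - Θ w‖ * ‖1 - (starRingEnd ℂ) w * z‖
      ≤ ‖Θ z + (starRingEnd ℂ) (Θ w)‖ * ‖z - w‖ := by
    rw [div_mul_eq_mul_div, div_le_iff₀ hposd] at key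
    linarith [key]
  have sq2 : (‖Θ z - Θ w‖ * ‖1 - (starRingEnd ℂ) w * z‖)^2
      ≤ (‖Θ z + (starRingEnd ℂ) (Θ w)‖ * ‖z - w‖)^2 := by
    apply pow_le_pow_left₀ (by positivity) key2
  calc normSq (Θ z - Θ w) * normSq (1 - (starRingEnd ℂ) w * z)
      = (‖Θ z - Θ w‖ * ‖1 - (starRingEnd ℂ) w * z‖)^2 := by
        rw [mul_pow, Complex.sq_norm, Complex.sq_norm]
    _ ≤ (‖Θ z + (starRingEnd ℂ) (Θ w)‖ * ‖z - w‖)^2 := sq2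
    _ = normSq (Θ z + (starRingEnd ℂ) (Θ w)) * normSq (z - w) := by
        rw [mul_pow, Complex.sq_norm, Complex.sq_norm]

lemma sprhp_expand {Θ : ℂ → ℂ} (hd : DifferentiableOn ℂ Θ (ball (0:ℂ) 1))
    (hre : ∀ u ∈ ball (0:ℂ) 1, 0 < (Θ u).re) {z w : ℂ}
    (hz : z ∈ ball (0:ℂ) 1) (hw : w ∈ ball (0:ℂ) 1) :
    (1 - normSq w) * (1 - normSq z) * (normSq (Θ z) + normSq (Θ w))
      ≤ 2 * ((Θ z * Θ w).re) * normSq (z - w)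
        + 2 * ((Θ z * (starRingEnd ℂ) (Θ w)).re) * normSq (1 - (starRingEnd ℂ) w * z) := by
  have h := sprhp hd hre hz hw
  have e1 := normSq_sub' (Θ z) (Θ w)
  have e2 := normSq_addconj (Θ z) (Θ w)
  have e3 := key_id z w
  nlinarith [normSq_nonneg (z - w), normSq_nonneg (1 - (starRingEnd ℂ) w * z),
    normSq_nonneg (Θ z), normSq_nonneg (Θ w)]

lemma tball {ζ : ℂ} (hζ : normSq ζ = 1) {t : ℝ} (ht : t ∈ Set.Ioo (0:ℝ) 1) :
    (t:ℂ) * ζ ∈ ball (0:ℂ) 1 := by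
  rw [mem_ball_iff_normSq, normSq_mul, hζ, mul_one, normSq_ofReal]
  nlinarith [ht.1, ht.2]

lemma normSq_tζ {ζ : ℂ} (hζ : normSq ζ = 1) (t : ℝ) : normSq ((t:ℂ) * ζ) = t^2 := by
  rw [normSq_mul, hζ, mul_one, normSq_ofReal]; ring

/-- Master pointwise inequality along the radius. -/

lemma radial_ineq {Θ : ℂ → ℂ} (hd : DifferentiableOn ℂ Θ (ball (0:ℂ) 1))
    (hre : ∀ u ∈ ball (0:ℂ) 1, 0 < (Θ u).re) {ζ : ℂ} (hζ : normSq ζ = 1)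
    {z : ℂ} (hz : z ∈ ball (0:ℂ) 1) {t : ℝ} (ht : t ∈ Set.Ioo (0:ℝ) 1) :
    (1 + t) * (1 - normSq z) * normSq ((1 - (t:ℂ)) * Θ ((t:ℂ) * ζ))
      ≤ 2 * ((Θ z * ((1 - (t:ℂ)) * Θ ((t:ℂ) * ζ))).re) * normSq (z - (t:ℂ) * ζ)
        + 2 * ((Θ z * (starRingEnd ℂ) ((1 - (t:ℂ)) * Θ ((t:ℂ) * ζ))).re)
          * normSq (1 - (starRingEnd ℂ) ((t:ℂ) * ζ) * z) := by
  have hw := tball hζ ht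
  have h := sprhp_expand hd hre hz hw
  rw [normSq_tζ hζ] at h
  set B := Θ ((t:ℂ) * ζ)
  have e0 : (1 : ℂ) - (t:ℂ) = ((1 - t : ℝ) : ℂ) := by push_cast; ring
  have e1 : normSq ((1 - (t:ℂ)) * B) = (1-t)^2 * normSq B := by
    rw [e0, normSq_mul, normSq_ofReal]; ring
  have e2 : (Θ z * ((1 - (t:ℂ)) * B)).re = (1-t) * (Θ z * B).re := by
    rw [e0, show Θ z * (((1 - t : ℝ):ℂ) * B) = ((1 - t : ℝ):ℂ) * (Θ z * B) by ring,
      Complex.re_ofReal_mul]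
  have e3 : (Θ z * (starRingEnd ℂ) ((1 - (t:ℂ)) * B)).re
      = (1-t) * (Θ z * (starRingEnd ℂ) B).re := by
    rw [e0, map_mul, Complex.conj_ofReal,
      show Θ z * (((1 - t : ℝ):ℂ) * (starRingEnd ℂ) B) = ((1 - t : ℝ):ℂ) *
        (Θ z * (starRingEnd ℂ) B) by ring, Complex.re_ofReal_mul]
  rw [e1, e2, e3]
  have h1t : (0:ℝ) < 1 - t := by linarith [ht.2]
  have hnz : normSq z < 1 := mem_ball_iff_normSq.1 hz
  have hh := mul_le_mul_of_nonneg_left h (le_of_lt h1t)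
  have hfac : 0 ≤ (1-t) * ((1-t^2) * ((1 - normSq z) * normSq (Θ z))) := by
    have h2 : (0:ℝ) ≤ 1 - t^2 := by nlinarith [ht.1, ht.2]
    have h3 : (0:ℝ) ≤ 1 - normSq z := by linarith
    exact mul_nonneg h1t.le (mul_nonneg h2 (mul_nonneg h3 (normSq_nonneg _)))
  nlinarith [hh, hfac]

/-- Julia-type lemma for holomorphic functions with positive real part. -/

lemma juliaRHP {Θ : ℂ → ℂ} (hd : DifferentiableOn ℂ Θ (ball (0:ℂ) 1))
    (hre : ∀ u ∈ ball (0:ℂ) 1, 0 < (Θ u).re) {ζ : ℂ} (hζ : normSq ζ = 1) {γ : ℝ} (hγ : 0 < γ)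
    (hlim : Tendsto (fun t : ℝ => (1 - (t:ℂ)) * Θ ((t:ℂ) * ζ))
      (𝓝[Set.Ioo (0:ℝ) 1] 1) (𝓝 (γ:ℂ)))
    {z : ℂ} (hz : z ∈ ball (0:ℂ) 1) :
    γ / 2 * ((1 - normSq z) / normSq (ζ - z)) ≤ (Θ z).re := by
  have hnz : normSq z < 1 := mem_ball_iff_normSq.1 hz
  have hζz : normSq (ζ - z) > 0 := by
    refine normSq_pos.2 ?_
    intro h
    have : ζ = z := by linear_combination h
    rw [this] at hζ; linarith
  set l : Filter ℝ := 𝓝[Set.Ioo (0:ℝ) 1] 1 with hl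
  haveI : l.NeBot := right_nhdsWithin_Ioo_neBot (by norm_num)
  have htt : Tendsto (fun t : ℝ => (t:ℂ)) l (𝓝 (1:ℂ)) := by
    have : Tendsto (fun t : ℝ => t) l (𝓝 (1:ℝ)) := tendsto_id.mono_left nhdsWithin_le_nhds
    exact (Complex.continuous_ofReal.tendsto 1).comp this
  have htr : Tendsto (fun t : ℝ => t) l (𝓝 (1:ℝ)) := tendsto_id.mono_left nhdsWithin_le_nhds
  set E : ℝ → ℂ := fun t => (1 - (t:ℂ)) * Θ ((t:ℂ) * ζ) with hE
  -- limit of LHS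
  have hL : Tendsto (fun t : ℝ => (1 + t) * (1 - normSq z) * normSq (E t)) l
      (𝓝 (2 * (1 - normSq z) * γ^2)) := by
    have h1 : Tendsto (fun t : ℝ => normSq (E t)) l (𝓝 (γ^2)) := by
      have := (Complex.continuous_normSq.tendsto ((γ:ℝ):ℂ)).comp hlim
      simpa [Function.comp_def, normSq_ofReal, sq] using this
    have h2 : Tendsto (fun t : ℝ => (1 + t) * (1 - normSq z)) l (𝓝 (2 * (1 - normSq z))) := by
      have h21 : Tendsto (fun t : ℝ => 1 + t) l (𝓝 (2:ℝ)) := by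
        have := (tendsto_const_nhds (x := (1:ℝ)) (f := l)).add htr
        norm_num at this
        exact this
      exact h21.mul (tendsto_const_nhds (x := 1 - normSq z))
    simpa [mul_assoc] using h2.mul h1
  -- limit of RHS
  have hR : Tendsto (fun t : ℝ =>
      2 * ((Θ z * E t).re) * normSq (z - (t:ℂ) * ζ)
        + 2 * ((Θ z * (starRingEnd ℂ) (E t)).re) * normSq (1 - (starRingEnd ℂ) ((t:ℂ) * ζ) * z)) l
      (𝓝 (4 * γ * (Θ z).re * normSq (ζ - z))) := by
    have hA : Tendsto (fun t : ℝ => (Θ z * E t).re) l (𝓝 (γ * (Θ z).re)) := by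
      have := (Complex.continuous_re.tendsto _).comp
        ((tendsto_const_nhds (x := Θ z)).mul hlim)
      simp only [Function.comp_def] at this
      convert this using 2
      rw [show Θ z * ((γ:ℝ):ℂ) = ((γ:ℝ):ℂ) * Θ z by ring, Complex.re_ofReal_mul]
    have hA' : Tendsto (fun t : ℝ => (Θ z * (starRingEnd ℂ) (E t)).re) l (𝓝 (γ * (Θ z).re)) := by
      have hconj : Tendsto (fun t : ℝ => (starRingEnd ℂ) (E t)) l (𝓝 ((γ:ℝ):ℂ)) := by
        have := (Complex.continuous_conj.tendsto ((γ:ℝ):ℂ)).comp hlim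
        simpa [Function.comp_def, Complex.conj_ofReal] using this
      have := (Complex.continuous_re.tendsto _).comp
        ((tendsto_const_nhds (x := Θ z)).mul hconj)
      simp only [Function.comp_def] at this
      convert this using 2
      rw [show Θ z * ((γ:ℝ):ℂ) = ((γ:ℝ):ℂ) * Θ z by ring, Complex.re_ofReal_mul]
    have hn1 : Tendsto (fun t : ℝ => normSq (z - (t:ℂ) * ζ)) l (𝓝 (normSq (ζ - z))) := by
      have : Tendsto (fun t : ℝ => z - (t:ℂ) * ζ) l (𝓝 (z - ζ)) := by
        simpa using (tendsto_const_nhds (x := z)).sub (htt.mul tendsto_const_nhds)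
      have := (Complex.continuous_normSq.tendsto _).comp this
      simpa [Function.comp_def, show normSq (z - ζ) = normSq (ζ - z) by
        rw [← normSq_neg]; ring_nf] using this
    have hn2 : Tendsto (fun t : ℝ => normSq (1 - (starRingEnd ℂ) ((t:ℂ) * ζ) * z)) l
        (𝓝 (normSq (ζ - z))) := by
      have h0 : Tendsto (fun t : ℝ => 1 - (starRingEnd ℂ) ((t:ℂ) * ζ) * z) l
          (𝓝 (1 - (starRingEnd ℂ) ζ * z)) := by
        have hc : Tendsto (fun t : ℝ => (starRingEnd ℂ) ((t:ℂ) * ζ)) l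
            (𝓝 ((starRingEnd ℂ) ζ)) := by
          have h1 : Tendsto (fun t : ℝ => (t:ℂ) * ζ) l (𝓝 ζ) := by
            simpa using htt.mul (tendsto_const_nhds (x := ζ))
          have := (Complex.continuous_conj.tendsto ζ).comp h1
          simp only [Function.comp_def] at this
          exact this
        simpa using (tendsto_const_nhds (x := (1:ℂ))).sub (hc.mul tendsto_const_nhds)
      have := (Complex.continuous_normSq.tendsto _).comp h0
      have heq : normSq (1 - (starRingEnd ℂ) ζ * z) = normSq (ζ - z) := by
        have e : 1 - (starRingEnd ℂ) ζ * z = (starRingEnd ℂ) ζ * (ζ - z) := by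
          rw [mul_sub, show (starRingEnd ℂ) ζ * ζ = ((normSq ζ : ℝ):ℂ) from by
            rw [mul_comm, Complex.mul_conj], hζ]
          norm_num
        rw [e, normSq_mul, normSq_conj, hζ, one_mul]
      simpa [Function.comp_def, heq] using this
    have := ((tendsto_const_nhds (x := (2:ℝ))).mul hA).mul hn1 |>.add
      (((tendsto_const_nhds (x := (2:ℝ))).mul hA').mul hn2)
    convert this using 1
    ring
  -- pass to the limit
  have key : 2 * (1 - normSq z) * γ^2 ≤ 4 * γ * (Θ z).re * normSq (ζ - z) := by
    apply le_of_tendsto_of_tendsto hL hR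
    filter_upwards [self_mem_nhdsWithin] with t ht
    exact radial_ineq hd hre hζ hz ht
  rw [div_mul_div_comm, div_le_iff₀ (by positivity)]
  nlinarith [key, hγ]

lemma rhp_radial_bound {Θ : ℂ → ℂ} (hd : DifferentiableOn ℂ Θ (ball (0:ℂ) 1))
    (hre : ∀ u ∈ ball (0:ℂ) 1, 0 < (Θ u).re) {ζ : ℂ} (hζ : normSq ζ = 1)
    {t : ℝ} (ht : t ∈ Set.Ioo (0:ℝ) 1) :
    ‖(1 - (t:ℂ)) * Θ ((t:ℂ) * ζ)‖ ≤ 4 * ‖Θ 0‖ := by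
  have h0 : (0:ℂ) ∈ ball (0:ℂ) 1 := by simp
  have hw := tball hζ ht
  have h := sprhp_expand hd hre h0 hw
  rw [normSq_tζ hζ] at h
  set A := Θ 0; set B := Θ ((t:ℂ) * ζ)
  have hb1 : (A * B).re ≤ ‖A‖ * ‖B‖ := by
    calc (A * B).re ≤ ‖A * B‖ := Complex.re_le_norm _
      _ = ‖A‖ * ‖B‖ := norm_mul _ _
  have hb2 : (A * (starRingEnd ℂ) B).re ≤ ‖A‖ * ‖B‖ := by
    calc (A * (starRingEnd ℂ) B).re ≤ ‖A * (starRingEnd ℂ) B‖ := Complex.re_le_norm _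
      _ = ‖A‖ * ‖B‖ := by rw [norm_mul, Complex.norm_conj]
  have hsim : normSq ((0:ℂ) - (t:ℂ)*ζ) = t^2 := by
    rw [zero_sub, normSq_neg, normSq_tζ hζ]
  have hsim2 : normSq (1 - (starRingEnd ℂ) ((t:ℂ)*ζ) * 0) = 1 := by simp
  rw [hsim, hsim2, normSq_zero] at h
  -- h : (1−t²)(1−0)(nA+nB) ≤ 2 (AB).re t² + 2 (AconjB).re * 1
  have habs : ‖(1 - (t:ℂ)) * B‖ = (1-t) * ‖B‖ := by
    rw [norm_mul, show (1:ℂ) - (t:ℂ) = ((1-t:ℝ):ℂ) by push_cast; ring, Complex.norm_real, Real.norm_eq_abs,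
      abs_of_pos (by linarith [ht.2])]
  rw [habs]
  have hBnn := norm_nonneg B
  have hAnn := norm_nonneg A
  have hnB : normSq B = ‖B‖ ^ 2 := (Complex.sq_norm B).symm
  have hnA : normSq A = ‖A‖ ^ 2 := (Complex.sq_norm A).symm
  rw [hnA, hnB] at h
  have hb1' := mul_le_mul_of_nonneg_right hb1 (sq_nonneg t)
  have ht2 : t^2 ≤ 1 := by nlinarith [ht.1, ht.2]
  have h4 : (1-t^2) * (‖B‖^2) ≤ 4 * (‖A‖ * ‖B‖) := by
    nlinarith [h, hb1', hb2, mul_nonneg (mul_nonneg hAnn hBnn) (sub_nonneg.2 ht2),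
      mul_nonneg (sub_nonneg.2 ht2) (sq_nonneg (‖A‖))]
  rcases eq_or_lt_of_le hBnn with hb0 | hb0
  · rw [← hb0, mul_zero]; positivity
  · have h5 : ((1-t) * ‖B‖) * ‖B‖ ≤ (4 * ‖A‖) * ‖B‖ := by
      nlinarith [h4, mul_nonneg (mul_nonneg ht.1.le
        (by linarith [ht.2] : (0:ℝ) ≤ 1-t)) (sq_nonneg (‖B‖))]
    exact le_of_mul_le_mul_right h5 hb0

def myStolz (ζ : ℂ) (M : ℝ) : Set ℂ :=
  {z : ℂ | ‖z‖ < 1 ∧ ‖ζ - z‖ < M * (1 - ‖z‖)}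

lemma rhp_or_const {f : ℂ → ℂ} (hd : DifferentiableOn ℂ f (ball (0:ℂ) 1))
    (hre : ∀ z ∈ ball (0:ℂ) 1, 0 ≤ (f z).re) :
    (∀ z ∈ ball (0:ℂ) 1, 0 < (f z).re) ∨ (∀ z ∈ ball (0:ℂ) 1, f z = f 0) := by
  by_cases hc : ∃ z₀ ∈ ball (0:ℂ) 1, (f z₀).re = 0
  · obtain ⟨z₀, hz₀, hfz₀⟩ := hc
    rcases (hd.analyticOnNhd isOpen_ball).is_constant_or_isOpen
      (convex_ball (0:ℂ) 1).isPreconnected with ⟨w, hw⟩ | hopen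
    · right; intro z hz; rw [hw z hz, hw 0 (by simp)]
    · exfalso
      have himg : IsOpen (f '' ball (0:ℂ) 1) := hopen _ subset_rfl isOpen_ball
      have hmem : f z₀ ∈ f '' ball (0:ℂ) 1 := ⟨z₀, hz₀, rfl⟩
      obtain ⟨ε, hε, hball⟩ := Metric.isOpen_iff.1 himg _ hmem
      have hwmem : f z₀ - ((ε/2 : ℝ):ℂ) ∈ ball (f z₀) ε := by
        rw [mem_ball, Complex.dist_eq]
        simp only [sub_sub_cancel_left, norm_neg, Complex.norm_real, Real.norm_eq_abs]
        rw [abs_of_pos (by linarith)]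
        linarith
      obtain ⟨z₁, hz₁, hfz₁⟩ := hball hwmem
      have : (f z₁).re = -(ε/2) := by
        rw [hfz₁, Complex.sub_re, hfz₀, Complex.ofReal_re]; ring
      have := hre z₁ hz₁
      linarith
  · left
    push_neg at hc
    intro z hz
    exact lt_of_le_of_ne (hre z hz) (Ne.symm (hc z hz))

lemma radial_mem_stolz {ζ : ℂ} (habs : ‖ζ‖ = 1) {t : ℝ} (ht : t ∈ Set.Ioo (0:ℝ) 1) :
    ((t:ℂ) * ζ) ∈ StolzAngle ζ 2 := by
  have h1 : ‖(t:ℂ) * ζ‖ = t := by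
    rw [norm_mul, habs, mul_one, Complex.norm_real, Real.norm_eq_abs, abs_of_pos ht.1]
  constructor
  · rw [h1]; exact ht.2
  · have h2 : ζ - (t:ℂ) * ζ = ((1-t:ℝ):ℂ) * ζ := by push_cast; ring
    rw [h1, h2, norm_mul, habs, mul_one, Complex.norm_real, Real.norm_eq_abs, abs_of_pos (by linarith [ht.2])]
    linarith [ht.2]

lemma radial_tendsto_s13 {h : ℂ → ℂ} {ζ L : ℂ} (habs : ‖ζ‖ = 1)
    (hal : AngularLimit h ζ L) :
    Tendsto (fun t : ℝ => h ((t:ℂ) * ζ)) (𝓝[Set.Ioo (0:ℝ) 1] 1) (𝓝 L) := by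
  apply (hal 2 one_lt_two).comp
  rw [tendsto_nhdsWithin_iff]
  constructor
  · have htt : Tendsto (fun t : ℝ => (t:ℂ)) (𝓝[Set.Ioo (0:ℝ) 1] 1) (𝓝 (1:ℂ)) :=
      (Complex.continuous_ofReal.tendsto 1).comp (tendsto_id.mono_left nhdsWithin_le_nhds)
    simpa using htt.mul (tendsto_const_nhds (x := ζ))
  · filter_upwards [self_mem_nhdsWithin] with t ht
    exact radial_mem_stolz habs ht

lemma re_K {ζ : ℂ} (hζ : normSq ζ = 1) (z : ℂ) :
    ((ζ + z) / (ζ - z)).re = (1 - normSq z) / normSq (ζ - z) := by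
  rw [re_div']
  congr 1
  simp only [normSq_apply] at hζ ⊢
  simp only [mul_re, add_re, add_im, map_sub, conj_re, conj_im, sub_re, sub_im]
  linear_combination hζ


set_option maxHeartbeats 2000000 in
/-- Theorem `t.P2`, inequality part: the parabolic-type
Cowen–Pommerenke inequality holds also for self-maps of hyperbolic type. -/
theorem stmt13 (N : ℕ) (F : ℂ → ℂ)
    (hF : DifferentiableOn ℂ F (ball (0:ℂ) 1))
    (hmaps : Set.MapsTo F (ball (0:ℂ) 1) (ball (0:ℂ) 1))
    (hlim1 : AngularLimit F 1 1)
    (α : ℝ) (hα : AngularLimit (fun z => (F z - 1) / (z - 1)) 1 (α : ℂ))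
    (hα1 : α ≤ 1)
    (hF0 : F 0 ≠ 0)
    (ζ : Fin N → ℂ) (hinj : Function.Injective ζ)
    (hζ : ∀ n, ‖ζ n‖ = 1) (hζ1 : ∀ n, ζ n ≠ 1)
    (hfix : ∀ n, AngularLimit F (ζ n) (ζ n))
    (d : Fin N → ℝ)
    (hder : ∀ n, AngularLimit (fun z => (F z - ζ n) / (z - ζ n)) (ζ n) ((d n : ℝ) : ℂ))
    (hd : ∀ n, 1 < d n) :
    (∑ n, ‖1 - ζ n‖ ^ 2 / (d n - 1)) ≤ 2 * (1 / F 0 - 1).re := by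
  set l : Filter ℝ := 𝓝[Set.Ioo (0:ℝ) 1] 1 with hldef
  haveI hlne : l.NeBot := right_nhdsWithin_Ioo_neBot (by norm_num)
  have h0mem : (0:ℂ) ∈ ball (0:ℂ) 1 := by simp
  have habs1 : ‖(1:ℂ)‖ = 1 := by simp
  have hnsq1 : normSq (1:ℂ) = 1 := by simp
  have hnsqζ : ∀ n, normSq (ζ n) = 1 := fun n => by rw [← Complex.sq_norm, hζ n]; norm_num
  have hζ0 : ∀ n, ζ n ≠ 0 := fun n h => by simpa [h] using hζ n
  have hF1 : ∀ z ∈ ball (0:ℂ) 1, (1:ℂ) - F z ≠ 0 := by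
    intro z hz h
    have h1 : F z = 1 := by linear_combination -h
    have h2 := mem_ball_zero_iff.1 (hmaps hz)
    rw [h1] at h2; simp at h2
  have hz1ne : ∀ z ∈ ball (0:ℂ) 1, (1:ℂ) - z ≠ 0 := by
    intro z hz h
    have h1 : z = 1 := by linear_combination -h
    have h2 := mem_ball_zero_iff.1 hz
    rw [h1] at h2; simp at h2
  have hζzne : ∀ (n : Fin N), ∀ z ∈ ball (0:ℂ) 1, ζ n - z ≠ 0 := by
    intro n z hz h
    have h1 : z = ζ n := by linear_combination -h
    have h2 := mem_ball_zero_iff.1 hz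
    rw [h1, hζ n] at h2; simp at h2
  -- Cayley transform of F
  set Θ₁ : ℂ → ℂ := fun z => (1 + F z) / (1 - F z) with hΘ₁def
  have hΘ₁d : DifferentiableOn ℂ Θ₁ (ball (0:ℂ) 1) :=
    ((differentiableOn_const _).add hF).div ((differentiableOn_const _).sub hF) hF1
  have hΘ₁re : ∀ z ∈ ball (0:ℂ) 1, 0 < (Θ₁ z).re := by
    intro z hz
    have he : (Θ₁ z).re = (1 - normSq (F z)) / normSq (1 - F z) := re_K hnsq1 (F z)
    rw [he]
    have h1 : normSq (F z) < 1 := mem_ball_iff_normSq.1 (hmaps hz)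
    have h2 : 0 < normSq (1 - F z) := normSq_pos.2 (hF1 z hz)
    have h3 : 0 < 1 - normSq (F z) := by linarith
    positivity
  -- radial limits at 1
  have hFrad : Tendsto (fun t : ℝ => F ((t:ℂ))) l (𝓝 1) := by
    have := radial_tendsto_s13 habs1 hlim1
    rw [hldef]
    simpa only [mul_one] using this
  have hqrad : Tendsto (fun t : ℝ => (F ((t:ℂ)) - 1) / ((t:ℂ) - 1)) l (𝓝 (α:ℂ)) := by
    have := radial_tendsto_s13 habs1 hα
    rw [hldef]
    simpa only [mul_one] using this
  have htne1 : ∀ t ∈ Set.Ioo (0:ℝ) 1, ((t:ℂ)) - 1 ≠ 0 := by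
    intro t ht h
    have h1 : (t:ℂ) = 1 := by linear_combination h
    exact (ne_of_lt ht.2) (by exact_mod_cast h1)
  have htmem : ∀ t ∈ Set.Ioo (0:ℝ) 1, ((t:ℂ)) ∈ ball (0:ℂ) 1 := by
    intro t ht; simpa using tball hnsq1 ht
  -- the radial rewriting of (1-t) * Θ₁ t
  have hE₁eq : ∀ t ∈ Set.Ioo (0:ℝ) 1,
      (1 - (t:ℂ)) * Θ₁ ((t:ℂ) * 1) = (1 + F ((t:ℂ))) * ((F ((t:ℂ)) - 1) / ((t:ℂ) - 1))⁻¹ := by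
    intro t ht
    have h1 := hF1 _ (htmem t ht)
    have h2 := htne1 t ht
    rw [mul_one, hΘ₁def]
    have h3 : F ((t:ℂ)) - 1 ≠ 0 := fun h => h1 (by linear_combination -h)
    field_simp
    ring
  -- positivity of α
  have hα0 : 0 ≤ α := by
    have hre : Tendsto (fun t : ℝ => ((F ((t:ℂ)) - 1) / ((t:ℂ) - 1)).re) l (𝓝 α) := by
      have := (Complex.continuous_re.tendsto _).comp hqrad
      simpa [Function.comp_def] using this
    refine ge_of_tendsto hre ?_
    filter_upwards [self_mem_nhdsWithin] with t ht
    have h2 := htne1 t ht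
    have he : (F ((t:ℂ)) - 1) / ((t:ℂ) - 1) = (1 - F ((t:ℂ))) / ((1 - t : ℝ):ℂ) := by
      push_cast
      rw [div_eq_div_iff h2 (by intro h; exact h2 (by linear_combination -h))]
      ring
    rw [he, Complex.div_ofReal_re]
    have h4 : (F ((t:ℂ))).re < 1 := by
      have := mem_ball_zero_iff.1 (hmaps (htmem t ht))
      have h5 := Complex.re_le_norm (F ((t:ℂ)))
      linarith
    have h6 : 0 < 1 - t := by linarith [ht.2]
    have h7 : 0 ≤ (1 - F ((t:ℂ))).re := by
      rw [Complex.sub_re, Complex.one_re]; linarith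
    exact div_nonneg h7 h6.le
  have hαpos : 0 < α := by
    rcases lt_or_eq_of_le hα0 with h | h
    · exact h
    · exfalso
      -- α = 0 leads to a contradiction with the growth bound
      have hq0 : Tendsto (fun t : ℝ => (F ((t:ℂ)) - 1) / ((t:ℂ) - 1)) l (𝓝 0) := by
        rw [← h] at hqrad; simpa using hqrad
      have habsq : Tendsto (fun t : ℝ => ‖(F ((t:ℂ)) - 1) / ((t:ℂ) - 1)‖) l
          (𝓝[>] 0) := by
        rw [tendsto_nhdsWithin_iff]
        constructor
        · have := (continuous_norm.tendsto 0).comp hq0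
          simp only [Function.comp_def] at this
          simpa using this
        · filter_upwards [self_mem_nhdsWithin] with t ht
          have h3 : F ((t:ℂ)) - 1 ≠ 0 := fun hh => hF1 _ (htmem t ht) (by linear_combination -hh)
          exact norm_pos_iff.2 (div_ne_zero h3 (htne1 t ht))
      have hinv : Tendsto (fun t : ℝ =>
          (‖(F ((t:ℂ)) - 1) / ((t:ℂ) - 1)‖)⁻¹) l atTop :=
        habsq.inv_tendsto_nhdsGT_zero
      have hbig : Tendsto (fun t : ℝ => ‖(1 - (t:ℂ)) * Θ₁ ((t:ℂ) * 1)‖) l atTop := by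
        apply tendsto_atTop_mono' l ?_ hinv
        have h1F : ∀ᶠ t : ℝ in l, 1 ≤ ‖1 + F ((t:ℂ))‖ := by
          have : Tendsto (fun t : ℝ => ‖1 + F ((t:ℂ))‖) l (𝓝 2) := by
            have h2 : Tendsto (fun t : ℝ => 1 + F ((t:ℂ))) l (𝓝 2) := by
              have := (tendsto_const_nhds (x := (1:ℂ)) (f := l)).add hFrad
              norm_num at this; exact this
            have := (continuous_norm.tendsto 2).comp h2
            simpa [Function.comp_def, Complex.norm_two] using this
          filter_upwards [this.eventually (eventually_ge_nhds (by norm_num : (1:ℝ) < 2))]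
            with t ht
          exact ht
        filter_upwards [h1F, self_mem_nhdsWithin] with t h1 ht
        rw [hE₁eq t ht, norm_mul, norm_inv]
        have h2 : 0 ≤ (‖(F ((t:ℂ)) - 1) / ((t:ℂ) - 1)‖)⁻¹ := by positivity
        nlinarith
      have hcontra : ∀ᶠ t : ℝ in l,
          4 * ‖Θ₁ 0‖ < ‖(1 - (t:ℂ)) * Θ₁ ((t:ℂ) * 1)‖ :=
        hbig.eventually_gt_atTop _
      have := (hcontra.and self_mem_nhdsWithin).exists
      obtain ⟨t, h1, ht⟩ := this
      have h2 := rhp_radial_bound hΘ₁d hΘ₁re hnsq1 ht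
      linarith
  -- the Julia inequality for Θ₁ at 1
  have hlimΘ₁ : Tendsto (fun t : ℝ => (1 - (t:ℂ)) * Θ₁ ((t:ℂ) * 1)) l (𝓝 ((2/α : ℝ):ℂ)) := by
    have hαne : (α:ℂ) ≠ 0 := by exact_mod_cast ne_of_gt hαpos
    have h2 : Tendsto (fun t : ℝ => (1 + F ((t:ℂ))) * ((F ((t:ℂ)) - 1) / ((t:ℂ) - 1))⁻¹) l
        (𝓝 (2 * ((α:ℂ))⁻¹)) := by
      have ha : Tendsto (fun t : ℝ => 1 + F ((t:ℂ))) l (𝓝 2) := by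
        have := (tendsto_const_nhds (x := (1:ℂ)) (f := l)).add hFrad
        norm_num at this; exact this
      exact ha.mul (hqrad.inv₀ hαne)
    have heq : ((2/α : ℝ):ℂ) = 2 * ((α:ℂ))⁻¹ := by push_cast; ring
    rw [heq]
    apply h2.congr'
    filter_upwards [self_mem_nhdsWithin] with t ht
    exact (hE₁eq t ht).symm
  have hjulia1 : ∀ z ∈ ball (0:ℂ) 1,
      (1 - normSq z) / normSq (1 - z) ≤ (Θ₁ z).re := by
    intro z hz
    have h1 := juliaRHP hΘ₁d hΘ₁re hnsq1 (div_pos two_pos hαpos) hlimΘ₁ hz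
    have h2 : (2/α)/2 = 1/α := by ring
    rw [h2] at h1
    have h3 : (1:ℝ) ≤ 1/α := by
      rw [le_div_iff₀ hαpos]; linarith
    have h5 : 0 ≤ (1 - normSq z) / normSq (1 - z) := by
      have h6 := mem_ball_iff_normSq.1 hz
      exact div_nonneg (by linarith) (normSq_nonneg _)
    calc (1 - normSq z) / normSq (1 - z)
        = 1 * ((1 - normSq z) / normSq (1 - z)) := by ring
      _ ≤ 1/α * ((1 - normSq z) / normSq (1 - z)) := by
          apply mul_le_mul_of_nonneg_right h3 h5
      _ ≤ (Θ₁ z).re := h1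
  -- ψ = 1/(1-F) - 1/(1-z) has nonnegative real part
  set ψ : ℂ → ℂ := fun z => (1 - F z)⁻¹ - (1 - z)⁻¹ with hψdef
  have hψd : DifferentiableOn ℂ ψ (ball (0:ℂ) 1) := by
    apply DifferentiableOn.sub
    · exact ((differentiableOn_const _).sub hF).inv hF1
    · exact ((differentiableOn_const _).sub differentiableOn_id).inv hz1ne
  have hψre : ∀ z ∈ ball (0:ℂ) 1, 0 ≤ (ψ z).re := by
    intro z hz
    have hid : (2:ℂ) * ψ z = Θ₁ z - (1 + z) / (1 - z) := by
      rw [hψdef, hΘ₁def]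
      field_simp [hF1 z hz, hz1ne z hz]
      ring
    have hre2 : 2 * (ψ z).re = (Θ₁ z).re - ((1 + z) / (1 - z)).re := by
      have := congrArg Complex.re hid
      simpa [Complex.sub_re] using this
    have hK := re_K hnsq1 z
    rw [hK] at hre2
    have := hjulia1 z hz
    linarith
  -- F has no fixed point in the disk
  have hfixne : ∀ z ∈ ball (0:ℂ) 1, F z - z ≠ 0 := by
    intro z hz h
    have hψz : ψ z = 0 := by
      have hFz : F z = z := by linear_combination h
      show (1 - F z)⁻¹ - (1 - z)⁻¹ = 0
      rw [hFz, sub_self]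
    rcases rhp_or_const hψd hψre with hstrict | hconst
    · exact absurd (hψz ▸ hstrict z hz) (by simp)
    · have h1 : ψ 0 = 0 := by rw [← hconst z hz, hψz]
      have h2 : (1 - F 0)⁻¹ - 1 = 0 := by
        have h5 : (1 - F 0)⁻¹ - ((1:ℂ) - 0)⁻¹ = 0 := h1
        simpa using h5
      have h4 := hF1 0 h0mem
      have h3 : (1:ℂ) - F 0 = 1 := by
        have h6 : (1 - F 0)⁻¹ = 1 := by linear_combination h2
        field_simp at h6
        linear_combination -h6
      exact hF0 (by linear_combination -h3)
  -- the function Θ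
  set Θ : ℂ → ℂ := fun z => (1 - z) * (1 - F z) * (F z - z)⁻¹ with hΘdef
  have hΘd : DifferentiableOn ℂ Θ (ball (0:ℂ) 1) := by
    apply DifferentiableOn.mul
    · exact ((differentiableOn_const _).sub differentiableOn_id).mul
        ((differentiableOn_const _).sub hF)
    · exact (hF.sub differentiableOn_id).inv hfixne
  have hΘψ : ∀ z ∈ ball (0:ℂ) 1, Θ z = (ψ z)⁻¹ := by
    intro z hz
    rw [hΘdef, hψdef]
    field_simp [hF1 z hz, hz1ne z hz, hfixne z hz]
    ring
  have hΘre0 : ∀ z ∈ ball (0:ℂ) 1, 0 ≤ (Θ z).re := by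
    intro z hz
    rw [hΘψ z hz, Complex.inv_re]
    exact div_nonneg (hψre z hz) (normSq_nonneg _)
  have httc : Tendsto (fun t : ℝ => (t:ℂ)) l (𝓝 (1:ℂ)) :=
    (Complex.continuous_ofReal.tendsto 1).comp (tendsto_id.mono_left nhdsWithin_le_nhds)
  -- the masses
  set γ : Fin N → ℝ := fun n => normSq (1 - ζ n) / (d n - 1) with hγdef
  have hγpos : ∀ n, 0 < γ n := by
    intro n
    have h1 : 0 < normSq (1 - ζ n) := normSq_pos.2 (fun h => (hζ1 n) (by linear_combination -h))
    have h2 : 0 < d n - 1 := by linarith [hd n]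
    exact div_pos h1 h2
  -- the radial limit of (1-t) * Θ(t ζ n)
  have hγlim : ∀ n : Fin N, Tendsto (fun t : ℝ => (1 - (t:ℂ)) * Θ ((t:ℂ) * ζ n)) l
      (𝓝 ((γ n : ℝ):ℂ)) := by
    intro n
    set c : ℂ := ζ n with hcdef
    set dc : ℂ := ((d n : ℝ):ℂ) with hdcdef
    set q : ℝ → ℂ := fun t => (F ((t:ℂ) * c) - c) / ((t:ℂ) * c - c) with hqdef
    have hqrad_n : Tendsto q l (𝓝 dc) := radial_tendsto_s13 (hζ n) (hder n)
    have hFrad_n : Tendsto (fun t : ℝ => F ((t:ℂ) * c)) l (𝓝 c) := radial_tendsto_s13 (hζ n) (hfix n)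
    have hdc1 : (1:ℂ) - dc ≠ 0 := by
      intro h
      have h1 : dc = 1 := by linear_combination -h
      have h2 : d n = 1 := by
        rw [hdcdef] at h1
        exact_mod_cast h1
      linarith [hd n]
    have hcne : c ≠ 0 := hζ0 n
    have hne : c * (1 - dc) ≠ 0 := mul_ne_zero hcne hdc1
    have hlim0 : Tendsto (fun t : ℝ => (1 - (t:ℂ) * c) * (1 - F ((t:ℂ) * c)) *
        (c * (1 - q t))⁻¹) l (𝓝 ((1 - c) * (1 - c) * (c * (1 - dc))⁻¹)) := by
      refine Tendsto.mul (Tendsto.mul ?_ ?_) (Tendsto.inv₀ ?_ hne)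
      · have := (tendsto_const_nhds (x := (1:ℂ)) (f := l)).sub
          (httc.mul (tendsto_const_nhds (x := c)))
        simpa using this
      · exact (tendsto_const_nhds (x := (1:ℂ)) (f := l)).sub hFrad_n
      · exact (tendsto_const_nhds (x := c) (f := l)).mul
          ((tendsto_const_nhds (x := (1:ℂ)) (f := l)).sub hqrad_n)
    have hval : (1 - c) * (1 - c) * (c * (1 - dc))⁻¹ = ((γ n : ℝ):ℂ) := by
      have hconj : c * (starRingEnd ℂ) c = 1 := by
        rw [Complex.mul_conj, hnsqζ n, Complex.ofReal_one]
      have hmc : ((normSq (1 - c) : ℝ):ℂ) = (1 - c) * (starRingEnd ℂ) (1 - c) :=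
        (Complex.mul_conj _).symm
      have hcast : ((γ n : ℝ):ℂ) = ((normSq (1 - c) : ℝ):ℂ) / (dc - 1) := by
        rw [hγdef]
        push_cast
        rfl
      rw [hcast, hmc]
      have hdc1' : dc - 1 ≠ 0 := fun h => hdc1 (by linear_combination -h)
      have hY : starRingEnd ℂ c = c⁻¹ := eq_inv_of_mul_eq_one_right hconj
      rw [map_sub, map_one, hY]
      field_simp
      ring
    rw [← hval]
    apply hlim0.congr'
    filter_upwards [self_mem_nhdsWithin] with t ht
    have hzmem := tball (hnsqζ n) ht
    have hFz := hfixne _ hzmem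
    have hden : (t:ℂ) * c - c ≠ 0 := by
      intro h
      have h1 : ((t:ℂ) - 1) * c = 0 := by linear_combination h
      rcases mul_eq_zero.1 h1 with h2 | h2
      · exact htne1 t ht h2
      · exact hcne h2
    have h1t : (1:ℂ) - (t:ℂ) ≠ 0 := fun h => htne1 t ht (by linear_combination -h)
    have hkey : F ((t:ℂ) * c) - (t:ℂ) * c = (1 - (t:ℂ)) * (c * (1 - q t)) := by
      simp only [hqdef]
      rw [one_sub_div hden, mul_div_assoc', mul_div_assoc', eq_div_iff hden]
      ring
    have hc1q : c * (1 - q t) ≠ 0 := by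
      intro h
      exact hFz (by rw [hkey, h, mul_zero])
    show (1 - (t:ℂ) * c) * (1 - F ((t:ℂ) * c)) * (c * (1 - q t))⁻¹
        = (1 - (t:ℂ)) * Θ ((t:ℂ) * c)
    rw [hΘdef]
    show _ = (1 - (t:ℂ)) * ((1 - (t:ℂ) * c) * (1 - F ((t:ℂ) * c)) * (F ((t:ℂ) * c) - (t:ℂ) * c)⁻¹)
    rw [hkey, mul_inv]
    field_simp
  -- main claim by induction on finite sets of fixed points
  have claim : ∀ S : Finset (Fin N), ∀ z ∈ ball (0:ℂ) 1,
      (∑ j ∈ S, γ j / 2 * ((1 - normSq z) / normSq (ζ j - z))) ≤ (Θ z).re := by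
    intro S
    induction S using Finset.induction_on with
    | empty => intro z hz; simpa using hΘre0 z hz
    | @insert n S hnS IH =>
      set ΘS : ℂ → ℂ := fun u => Θ u -
        ∑ j ∈ S, ((γ j / 2 : ℝ):ℂ) * ((ζ j + u) / (ζ j - u)) with hΘS
      have hΘSd : DifferentiableOn ℂ ΘS (ball (0:ℂ) 1) := by
        apply hΘd.sub
        apply DifferentiableOn.fun_sum
        intro j _
        exact (differentiableOn_const _).mul
          (((differentiableOn_const _).add differentiableOn_id).div
            ((differentiableOn_const _).sub differentiableOn_id) (fun u hu => hζzne j u hu))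
      have hΘSre_eq : ∀ u ∈ ball (0:ℂ) 1, (ΘS u).re
          = (Θ u).re - ∑ j ∈ S, γ j / 2 * ((1 - normSq u) / normSq (ζ j - u)) := by
        intro u hu
        show (Θ u - ∑ j ∈ S, ((γ j / 2 : ℝ):ℂ) * ((ζ j + u) / (ζ j - u))).re = _
        rw [Complex.sub_re, Complex.re_sum]
        congr 1
        apply Finset.sum_congr rfl
        intro j _
        rw [Complex.re_ofReal_mul, re_K (hnsqζ j) u]
      have hΘSre0 : ∀ u ∈ ball (0:ℂ) 1, 0 ≤ (ΘS u).re := by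
        intro u hu
        rw [hΘSre_eq u hu]
        have := IH u hu
        linarith
      have hjne : ∀ j ∈ S, ζ j - ζ n ≠ 0 := by
        intro j hj h
        have h1 : ζ j = ζ n := by linear_combination h
        have h2 : j = n := hinj h1
        rw [h2] at hj
        exact hnS hj
      have hsumlim : Tendsto (fun t : ℝ =>
          ∑ j ∈ S, ((γ j / 2 : ℝ):ℂ) * ((ζ j + (t:ℂ) * ζ n) / (ζ j - (t:ℂ) * ζ n))) l
          (𝓝 (∑ j ∈ S, ((γ j / 2 : ℝ):ℂ) * ((ζ j + ζ n) / (ζ j - ζ n)))) := by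
        apply tendsto_finset_sum
        intro j hj
        apply Tendsto.mul tendsto_const_nhds
        apply Tendsto.div
        · have := (tendsto_const_nhds (x := ζ j) (f := l)).add
            (httc.mul (tendsto_const_nhds (x := ζ n)))
          simpa using this
        · have := (tendsto_const_nhds (x := ζ j) (f := l)).sub
            (httc.mul (tendsto_const_nhds (x := ζ n)))
          simpa using this
        · exact hjne j hj
      have hone_sub : Tendsto (fun t : ℝ => (1 - (t:ℂ))) l (𝓝 0) := by
        have := (tendsto_const_nhds (x := (1:ℂ)) (f := l)).sub httc
        simpa using this
      have hlimS : Tendsto (fun t : ℝ => (1 - (t:ℂ)) * ΘS ((t:ℂ) * ζ n)) l (𝓝 ((γ n : ℝ):ℂ)) := by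
        have h1 : Tendsto (fun t : ℝ => (1 - (t:ℂ)) * Θ ((t:ℂ) * ζ n)
            - (1 - (t:ℂ)) * ∑ j ∈ S, ((γ j / 2 : ℝ):ℂ)
              * ((ζ j + (t:ℂ) * ζ n) / (ζ j - (t:ℂ) * ζ n))) l (𝓝 ((γ n : ℝ):ℂ)) := by
          have h2 := (hγlim n).sub (hone_sub.mul hsumlim)
          simpa using h2
        apply h1.congr
        intro t
        show _ = (1 - (t:ℂ)) * (Θ ((t:ℂ) * ζ n) - ∑ j ∈ S, _)
        ring
      rcases rhp_or_const hΘSd hΘSre0 with hstrict | hconst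
      · intro z hz
        have hj := juliaRHP hΘSd hstrict (hnsqζ n) (hγpos n) hlimS hz
        rw [hΘSre_eq z hz] at hj
        rw [Finset.sum_insert hnS]
        linarith
      · exfalso
        have hconst0 : Tendsto (fun t : ℝ => (1 - (t:ℂ)) * ΘS ((t:ℂ) * ζ n)) l (𝓝 0) := by
          have h1 : Tendsto (fun t : ℝ => (1 - (t:ℂ)) * ΘS 0) l (𝓝 0) := by
            have := hone_sub.mul (tendsto_const_nhds (x := ΘS 0))
            simpa using this
          apply h1.congr'
          filter_upwards [self_mem_nhdsWithin] with t ht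
          rw [hconst _ (tball (hnsqζ n) ht)]
        have h2 := tendsto_nhds_unique hlimS hconst0
        have h3 : γ n = 0 := by exact_mod_cast h2
        linarith [hγpos n]
  -- conclusion
  have hfinal := claim Finset.univ 0 h0mem
  have hsimp : ∑ j : Fin N, γ j / 2 * ((1 - normSq 0) / normSq (ζ j - 0)) = ∑ j, γ j / 2 := by
    apply Finset.sum_congr rfl
    intro j _
    rw [normSq_zero, sub_zero, sub_zero, hnsqζ j]
    norm_num
  rw [hsimp] at hfinal
  have hΘ0 : Θ 0 = 1 / F 0 - 1 := by
    show (1 - 0) * (1 - F 0) * (F 0 - 0)⁻¹ = 1 / F 0 - 1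
    field_simp
    ring
  have hlhs : (∑ n, ‖1 - ζ n‖ ^ 2 / (d n - 1)) = ∑ n, γ n := by
    apply Finset.sum_congr rfl
    intro j _
    rw [hγdef, Complex.sq_norm]
  rw [hlhs, ← hΘ0]
  have hsum2 : ∑ j, γ j / 2 = (∑ j, γ j) / 2 := by
    rw [Finset.sum_div]
  rw [hsum2] at hfinal
  linarith
end
end
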